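/- arXiv:1708.08723 — 4 statements merged into one kernel-verified Lean document; each statement's English description precedes it below -/
import Mathlib

section
/- The separation number of any outer k-planar graph is at most 2k+3: every subgraph of an outer k-planar graph has a balanced separation of size at most 2k+3. -/
open Finset

open scoped Classical

/-- Two chords `{a,b}` and `{c,d}` on points in convex position (labeled by `Fin n`
in cyclic order) cross iff their endpoints interleave. -/
def Interleave {n : ℕ} (a b c d : Fin n) : Prop :=
  (min a b < min c d ∧ min c d < max a b ∧ max a b < max c d) ∨
  (min c d < min a b ∧ min a b < max c d ∧ max c d < max a b)

/-- Crossing of chords, as unordered pairs. -/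
def Sym2Cross {n : ℕ} (e f : Sym2 (Fin n)) : Prop :=
  ∃ a b c d : Fin n, e = s(a, b) ∧ f = s(c, d) ∧ Interleave a b c d

/-- A graph is outer `k`-planar if its vertices can be placed in convex (cyclic)
position so that every edge is crossed by at most `k` other edges. -/
def IsOuterKPlanar {V : Type*} [Fintype V] [DecidableEq V] (k : ℕ) (G : SimpleGraph V) : Prop :=
  ∃ σ : V ≃ Fin (Fintype.card V),
    ∀ e ∈ G.edgeFinset,
      (G.edgeFinset.filter (fun f => f ≠ e ∧ Sym2Cross (e.map σ) (f.map σ))).card ≤ k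

/-- A graph is outer `k`-quasi-planar if its vertices can be placed in convex
position so that no `k` edges pairwise cross. -/
def IsOuterKQuasiPlanar {V : Type*} [Fintype V] [DecidableEq V] (k : ℕ) (G : SimpleGraph V) : Prop :=
  ∃ σ : V ≃ Fin (Fintype.card V),
    ∀ S : Finset (Sym2 V), ↑S ⊆ G.edgeSet →
      (∀ e ∈ S, ∀ f ∈ S, e ≠ f → Sym2Cross (e.map σ) (f.map σ)) → S.card < k

/-- `G` has a balanced separation `(A,B)` of size at most `s`. -/
def HasBalancedSepAtMost {V : Type*} [Fintype V] [DecidableEq V]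
    (G : SimpleGraph V) (s : ℕ) : Prop :=
  ∃ A B : Finset V, A ∪ B = Finset.univ ∧
    (∀ u ∈ A \ B, ∀ v ∈ B \ A, ¬ G.Adj u v) ∧
    (A ∩ B).card ≤ s ∧
    3 * (A \ B).card ≤ 2 * Fintype.card V ∧ 3 * (B \ A).card ≤ 2 * Fintype.card V

/-- The separation number of `G` is at most `s`: every subgraph of `G`
(a subgraph `H ≤ G` restricted to a vertex subset `t`) has a balanced separation
of size at most `s`. -/
def SepNumAtMost {V : Type*} [Fintype V] [DecidableEq V]
    (G : SimpleGraph V) (s : ℕ) : Prop :=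
  ∀ (t : Finset V) (H : SimpleGraph V), H ≤ G →
    ∃ A B : Finset V, A ⊆ t ∧ B ⊆ t ∧ A ∪ B = t ∧
      (∀ u ∈ A \ B, ∀ v ∈ B \ A, ¬ H.Adj u v) ∧
      (A ∩ B).card ≤ s ∧
      3 * (A \ B).card ≤ 2 * t.card ∧ 3 * (B \ A).card ≤ 2 * t.card

namespace OkpSep

variable {V : Type*} [DecidableEq V]

/-- crossing of two position-ordered pairs, in terms of a position map. -/
def Icross (ρ : V → ℕ) (e f : V × V) : Prop :=
  (ρ e.1 < ρ f.1 ∧ ρ f.1 < ρ e.2 ∧ ρ e.2 < ρ f.2) ∨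
  (ρ f.1 < ρ e.1 ∧ ρ e.1 < ρ f.2 ∧ ρ f.2 < ρ e.2)

noncomputable def lowc (t : Finset V) (ρ : V → ℕ) (x : ℕ) : ℕ :=
  (t.filter fun w => ρ w < x).card

noncomputable def hic (t : Finset V) (ρ : V → ℕ) (x : ℕ) : ℕ :=
  (t.filter fun w => x < ρ w).card

noncomputable def cntc (t : Finset V) (ρ : V → ℕ) (x y : ℕ) : ℕ :=
  (t.filter fun w => x < ρ w ∧ ρ w < y).card

variable (t : Finset V) (ρ : V → ℕ)

lemma low_split (hinj : Function.Injective ρ) (a : V) (ha : a ∈ t) (y : ℕ) (hy : ρ a < y) :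
    lowc t ρ y = lowc t ρ (ρ a) + 1 + cntc t ρ (ρ a) y := by
  have h1 : t.filter (fun w => ρ w < y)
      = (t.filter fun w => ρ w < ρ a) ∪ insert a (t.filter fun w => ρ a < ρ w ∧ ρ w < y) := by
    ext w
    simp only [mem_filter, mem_union, mem_insert]
    constructor
    · rintro ⟨hw, hwy⟩
      rcases lt_trichotomy (ρ w) (ρ a) with h|h|h
      · exact Or.inl ⟨hw, h⟩
      · exact Or.inr (Or.inl (hinj h))
      · exact Or.inr (Or.inr ⟨hw, h, hwy⟩)
    · rintro (⟨hw, h⟩|h|⟨hw, h1, h2⟩)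
      · exact ⟨hw, h.trans hy⟩
      · subst h; exact ⟨ha, hy⟩
      · exact ⟨hw, h2⟩
  have hd1 : Disjoint (t.filter fun w => ρ w < ρ a)
      (insert a (t.filter fun w => ρ a < ρ w ∧ ρ w < y)) := by
    simp only [disjoint_left, mem_filter, mem_insert]
    rintro w ⟨hw, hlt⟩ (rfl|⟨_, h1, _⟩) <;> omega
  have hd2 : a ∉ (t.filter fun w => ρ a < ρ w ∧ ρ w < y) := by simp
  rw [lowc, h1, card_union_of_disjoint hd1, card_insert_of_notMem hd2]
  unfold lowc cntc; omega

lemma hi_split (hinj : Function.Injective ρ) (b : V) (hb : b ∈ t) (x : ℕ) (hx : x < ρ b) :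
    hic t ρ x = cntc t ρ x (ρ b) + 1 + hic t ρ (ρ b) := by
  have h1 : t.filter (fun w => x < ρ w)
      = (t.filter fun w => x < ρ w ∧ ρ w < ρ b) ∪ insert b (t.filter fun w => ρ b < ρ w) := by
    ext w
    simp only [mem_filter, mem_union, mem_insert]
    constructor
    · rintro ⟨hw, hwy⟩
      rcases lt_trichotomy (ρ w) (ρ b) with h|h|h
      · exact Or.inl ⟨hw, hwy, h⟩
      · exact Or.inr (Or.inl (hinj h))
      · exact Or.inr (Or.inr ⟨hw, h⟩)
    · rintro (⟨hw, h, _⟩|h|⟨hw, h⟩)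
      · exact ⟨hw, h⟩
      · subst h; exact ⟨hb, hx⟩
      · exact ⟨hw, hx.trans h⟩
  have hd1 : Disjoint (t.filter fun w => x < ρ w ∧ ρ w < ρ b)
      (insert b (t.filter fun w => ρ b < ρ w)) := by
    simp only [disjoint_left, mem_filter, mem_insert]
    rintro w ⟨hw, _, hlt⟩ (rfl|⟨_, h1⟩) <;> omega
  have hd2 : b ∉ (t.filter fun w => ρ b < ρ w) := by simp
  rw [hic, h1, card_union_of_disjoint hd1, card_insert_of_notMem hd2]
  unfold cntc hic; omega

lemma m_split (hinj : Function.Injective ρ) (a : V) (ha : a ∈ t) :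
    lowc t ρ (ρ a) + 1 + hic t ρ (ρ a) = t.card := by
  have h1 : t = (t.filter fun w => ρ w < ρ a) ∪ insert a (t.filter fun w => ρ a < ρ w) := by
    ext w
    simp only [mem_filter, mem_union, mem_insert]
    constructor
    · intro hw
      rcases lt_trichotomy (ρ w) (ρ a) with h|h|h
      · exact Or.inl ⟨hw, h⟩
      · exact Or.inr (Or.inl (hinj h))
      · exact Or.inr (Or.inr ⟨hw, h⟩)
    · rintro (⟨hw, _⟩|h|⟨hw, _⟩)
      · exact hw
      · subst h; exact ha
      · exact hw
  have hd1 : Disjoint (t.filter fun w => ρ w < ρ a) (insert a (t.filter fun w => ρ a < ρ w)) := by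
    simp only [disjoint_left, mem_filter, mem_insert]
    rintro w ⟨hw, hlt⟩ (rfl|⟨_, h1⟩) <;> omega
  have hd2 : a ∉ (t.filter fun w => ρ a < ρ w) := by simp
  conv_rhs => rw [h1]
  rw [card_union_of_disjoint hd1, card_insert_of_notMem hd2]
  unfold lowc hic; omega

lemma out_card (hinj : Function.Injective ρ) (x y : ℕ) (hxy : x ≤ y) :
    (t.filter fun w => ρ w < x ∨ y < ρ w).card = lowc t ρ x + hic t ρ y := by
  have h1 : t.filter (fun w => ρ w < x ∨ y < ρ w)
      = (t.filter fun w => ρ w < x) ∪ (t.filter fun w => y < ρ w) := by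
    ext w; simp only [mem_filter, mem_union]; tauto
  have hd : Disjoint (t.filter fun w => ρ w < x) (t.filter fun w => y < ρ w) := by
    simp only [disjoint_left, mem_filter]
    rintro w ⟨hw, h1⟩ ⟨_, h2⟩; omega
  rw [h1, card_union_of_disjoint hd]
  unfold lowc hic; omega

lemma cnt_mono {x y x' y' : ℕ} (h1 : x' ≤ x) (h2 : y ≤ y') :
    cntc t ρ x y ≤ cntc t ρ x' y' := by
  apply card_le_card
  intro w hw
  simp only [mem_filter] at hw ⊢
  exact ⟨hw.1, by omega⟩

lemma cnt_le_hi (x y : ℕ) : cntc t ρ x y ≤ hic t ρ x := by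
  apply card_le_card
  intro w hw
  simp only [mem_filter] at hw ⊢
  exact ⟨hw.1, hw.2.1⟩

lemma cnt_le_low (x y : ℕ) : cntc t ρ x y ≤ lowc t ρ y := by
  apply card_le_card
  intro w hw
  simp only [mem_filter] at hw ⊢
  exact ⟨hw.1, hw.2.2⟩

lemma low_mono {x x' : ℕ} (h : x ≤ x') : lowc t ρ x ≤ lowc t ρ x' := by
  apply card_le_card
  intro w hw
  simp only [mem_filter] at hw ⊢
  exact ⟨hw.1, by omega⟩

lemma hi_anti {x x' : ℕ} (h : x ≤ x') : hic t ρ x' ≤ hic t ρ x := by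
  apply card_le_card
  intro w hw
  simp only [mem_filter] at hw ⊢
  exact ⟨hw.1, by omega⟩

lemma cnt_tri (hinj : Function.Injective ρ) (b : V) (x y : ℕ) :
    cntc t ρ x y ≤ cntc t ρ x (ρ b) + 1 + cntc t ρ (ρ b) y := by
  have h1 : t.filter (fun w => x < ρ w ∧ ρ w < y)
      ⊆ (t.filter fun w => x < ρ w ∧ ρ w < ρ b) ∪
        insert b (t.filter fun w => ρ b < ρ w ∧ ρ w < y) := by
    intro w hw
    simp only [mem_filter, mem_union, mem_insert] at hw ⊢
    obtain ⟨hw, h1, h2⟩ := hw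
    rcases lt_trichotomy (ρ w) (ρ b) with h|h|h
    · exact Or.inl ⟨hw, h1, h⟩
    · exact Or.inr (Or.inl (hinj h))
    · exact Or.inr (Or.inr ⟨hw, h, h2⟩)
  have h2 := card_le_card h1
  have h3 := card_union_le (t.filter fun w => x < ρ w ∧ ρ w < ρ b)
      (insert b (t.filter fun w => ρ b < ρ w ∧ ρ w < y))
  have h4 := card_insert_le b (t.filter fun w => ρ b < ρ w ∧ ρ w < y)
  unfold cntc at *
  omega

lemma low_min (u : V) (hu : ∀ w ∈ t, ρ u ≤ ρ w) : lowc t ρ (ρ u) = 0 := by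
  rw [lowc, card_eq_zero, filter_eq_empty_iff]
  intro w hw
  have := hu w hw
  omega

/-- grouping lemma: four region sizes, each at most 2M/3, total at most M,
can be split into two groups each at most 2M/3. -/
lemma grp (c0 c1 c2 c3 M : ℕ) (h0 : 3*c0 ≤ 2*M) (h1 : 3*c1 ≤ 2*M) (h2 : 3*c2 ≤ 2*M)
    (h3 : 3*c3 ≤ 2*M) (hs : c0+c1+c2+c3 ≤ M) :
    ∃ b0 b1 b2 b3 : Bool,
      3*((if b0 then c0 else 0)+(if b1 then c1 else 0)+(if b2 then c2 else 0)+(if b3 then c3 else 0)) ≤ 2*M ∧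
      3*((if b0 then 0 else c0)+(if b1 then 0 else c1)+(if b2 then 0 else c2)+(if b3 then 0 else c3)) ≤ 2*M := by
  by_cases hA : 3*(c1+c2+c3) ≤ 2*M
  · exact ⟨true, false, false, false, by simp; omega, by simp; omega⟩
  by_cases hB : 3*(c0+c2+c3) ≤ 2*M
  · exact ⟨false, true, false, false, by simp; omega, by simp; omega⟩
  by_cases hC : 3*(c0+c1+c3) ≤ 2*M
  · exact ⟨false, false, true, false, by simp; omega, by simp; omega⟩
  by_cases hD : 3*(c0+c1+c2) ≤ 2*M
  · exact ⟨false, false, false, true, by simp; omega, by simp; omega⟩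
  exact ⟨true, true, false, false, by simp; omega, by simp; omega⟩


def SepGoal (k : ℕ) (t : Finset V) (E : Finset (V × V)) : Prop :=
  ∃ A B : Finset V, A ⊆ t ∧ B ⊆ t ∧ A ∪ B = t ∧
    (∀ c ∈ A \ B, ∀ d ∈ B \ A, (c,d) ∉ E ∧ (d,c) ∉ E) ∧
    (A ∩ B).card ≤ 2*k+3 ∧ 3*(A\B).card ≤ 2*t.card ∧ 3*(B\A).card ≤ 2*t.card

/-- Master assembly: a small separator set `S` together with a region classification
of `t \ S` (at most 4 regions, each of size at most `2|t|/3`, no `E`-edge between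
distinct regions) yields the desired balanced separation. -/
lemma master (k : ℕ) (t : Finset V) (E : Finset (V × V)) (S : Finset V)
    (hSt : S ⊆ t) (hSc : S.card ≤ 2*k+3)
    (reg : V → ℕ) (hreg : ∀ w ∈ t, w ∉ S → reg w ≤ 3)
    (hsz : ∀ i, 3 * ((t \ S).filter (fun w => reg w = i)).card ≤ 2 * t.card)
    (hcl : ∀ f ∈ E, f.1 ∈ S ∨ f.2 ∈ S ∨ reg f.1 = reg f.2) :
    SepGoal k t E := by
  rw [SepGoal]
  set R : ℕ → Finset V := fun i => (t \ S).filter (fun w => reg w = i) with hR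
  obtain ⟨b0, b1, b2, b3, hg1, hg2⟩ :=
    grp (R 0).card (R 1).card (R 2).card (R 3).card t.card
      (hsz 0) (hsz 1) (hsz 2) (hsz 3) (by
        -- sum of region sizes is at most |t|
        have hd01 : Disjoint (R 0) (R 1) := by
          simp only [hR, disjoint_left, mem_filter]
          rintro w ⟨_, h⟩ ⟨_, h'⟩; omega
        have hd012 : Disjoint (R 0 ∪ R 1) (R 2) := by
          simp only [hR, disjoint_left, mem_union, mem_filter]
          rintro w (⟨_, h⟩|⟨_, h⟩) ⟨_, h'⟩ <;> omega
        have hd0123 : Disjoint (R 0 ∪ R 1 ∪ R 2) (R 3) := by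
          simp only [hR, disjoint_left, mem_union, mem_filter]
          rintro w ((⟨_, h⟩|⟨_, h⟩)|⟨_, h⟩) ⟨_, h'⟩ <;> omega
        have h1 : (R 0 ∪ R 1 ∪ R 2 ∪ R 3).card
            = (R 0).card + (R 1).card + (R 2).card + (R 3).card := by
          rw [card_union_of_disjoint hd0123, card_union_of_disjoint hd012,
            card_union_of_disjoint hd01]
        have h2 : (R 0 ∪ R 1 ∪ R 2 ∪ R 3) ⊆ t := by
          intro w hw
          simp only [hR, mem_union, mem_filter, mem_sdiff] at hw
          rcases hw with ((⟨⟨h, _⟩, _⟩|⟨⟨h, _⟩, _⟩)|⟨⟨h, _⟩, _⟩)|⟨⟨h, _⟩, _⟩ <;> exact h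
        have := card_le_card h2
        omega)
  set bs : ℕ → Bool := fun i => if i = 0 then b0 else if i = 1 then b1 else
    if i = 2 then b2 else b3 with hbs
  set A : Finset V := S ∪ (t \ S).filter (fun w => bs (reg w) = true) with hA
  set B : Finset V := S ∪ (t \ S).filter (fun w => bs (reg w) = false) with hB
  have hAdB : A \ B = (t \ S).filter (fun w => bs (reg w) = true) := by
    ext w
    simp only [hA, hB, mem_sdiff, mem_union, mem_filter, not_or]
    constructor
    · rintro ⟨(h | h), h2, h3⟩
      · exact absurd h h2
      · exact h
    · rintro ⟨⟨hwt, hwS⟩, hb⟩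
      refine ⟨Or.inr ⟨⟨hwt, hwS⟩, hb⟩, hwS, ?_⟩
      rintro ⟨_, hb2⟩
      rw [hb] at hb2; cases hb2
  have hBdA : B \ A = (t \ S).filter (fun w => bs (reg w) = false) := by
    ext w
    simp only [hA, hB, mem_sdiff, mem_union, mem_filter, not_or]
    constructor
    · rintro ⟨(h | h), h2, h3⟩
      · exact absurd h h2
      · exact h
    · rintro ⟨⟨hwt, hwS⟩, hb⟩
      refine ⟨Or.inr ⟨⟨hwt, hwS⟩, hb⟩, hwS, ?_⟩
      rintro ⟨_, hb2⟩
      rw [hb] at hb2; cases hb2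
  have hAiB : A ∩ B = S := by
    ext w
    simp only [hA, hB, mem_inter, mem_union, mem_filter]
    constructor
    · rintro ⟨(h | h), (h' | h')⟩
      · exact h
      · exact h
      · exact h'
      · rw [h.2] at h'; cases h'.2
    · intro h; exact ⟨Or.inl h, Or.inl h⟩
  have hcardT : ∀ (bb : Bool),
      ((t \ S).filter (fun w => bs (reg w) = bb)).card ≤
        ((if bs 0 = bb then (R 0).card else 0) + (if bs 1 = bb then (R 1).card else 0)) +
        ((if bs 2 = bb then (R 2).card else 0) + (if bs 3 = bb then (R 3).card else 0)) := by
    intro bb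
    have hsub : (t \ S).filter (fun w => bs (reg w) = bb) ⊆
        ((if bs 0 = bb then R 0 else ∅) ∪ (if bs 1 = bb then R 1 else ∅)) ∪
        ((if bs 2 = bb then R 2 else ∅) ∪ (if bs 3 = bb then R 3 else ∅)) := by
      intro w hw
      simp only [mem_filter] at hw
      obtain ⟨hw1, hw2⟩ := hw
      obtain ⟨hwt, hwS⟩ := mem_sdiff.mp hw1
      have h3 := hreg w hwt hwS
      have h4 : reg w = 0 ∨ reg w = 1 ∨ reg w = 2 ∨ reg w = 3 := by omega
      simp only [mem_union]
      rcases h4 with h|h|h|h <;> rw [h] at hw2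
      · exact Or.inl (Or.inl (by rw [if_pos hw2]; exact mem_filter.mpr ⟨hw1, h⟩))
      · exact Or.inl (Or.inr (by rw [if_pos hw2]; exact mem_filter.mpr ⟨hw1, h⟩))
      · exact Or.inr (Or.inl (by rw [if_pos hw2]; exact mem_filter.mpr ⟨hw1, h⟩))
      · exact Or.inr (Or.inr (by rw [if_pos hw2]; exact mem_filter.mpr ⟨hw1, h⟩))
    have c1 := card_le_card hsub
    have c2 := card_union_le ((if bs 0 = bb then R 0 else ∅) ∪ (if bs 1 = bb then R 1 else ∅))
        ((if bs 2 = bb then R 2 else ∅) ∪ (if bs 3 = bb then R 3 else ∅))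
    have c3 := card_union_le (if bs 0 = bb then R 0 else ∅) (if bs 1 = bb then R 1 else ∅)
    have c4 := card_union_le (if bs 2 = bb then R 2 else ∅) (if bs 3 = bb then R 3 else ∅)
    have e0 : (if bs 0 = bb then R 0 else ∅).card = (if bs 0 = bb then (R 0).card else 0) := by
      split <;> simp
    have e1 : (if bs 1 = bb then R 1 else ∅).card = (if bs 1 = bb then (R 1).card else 0) := by
      split <;> simp
    have e2 : (if bs 2 = bb then R 2 else ∅).card = (if bs 2 = bb then (R 2).card else 0) := by
      split <;> simp
    have e3 : (if bs 3 = bb then R 3 else ∅).card = (if bs 3 = bb then (R 3).card else 0) := by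
      split <;> simp
    omega
  have hbs0 : bs 0 = b0 := by simp [hbs]
  have hbs1 : bs 1 = b1 := by simp [hbs]
  have hbs2 : bs 2 = b2 := by simp [hbs]
  have hbs3 : bs 3 = b3 := by simp [hbs]
  refine ⟨A, B, ?_, ?_, ?_, ?_, ?_, ?_, ?_⟩
  · exact union_subset hSt ((filter_subset _ _).trans sdiff_subset)
  · exact union_subset hSt ((filter_subset _ _).trans sdiff_subset)
  · apply Subset.antisymm
    · exact union_subset (union_subset hSt ((filter_subset _ _).trans sdiff_subset))
        (union_subset hSt ((filter_subset _ _).trans sdiff_subset))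
    · intro w hw
      by_cases hS : w ∈ S
      · exact mem_union_left _ (mem_union_left _ hS)
      · rcases hb : bs (reg w) with _ | _
        · exact mem_union_right _ (mem_union_right _ (by
            simp only [mem_filter, mem_sdiff]; exact ⟨⟨hw, hS⟩, hb⟩))
        · exact mem_union_left _ (mem_union_right _ (by
            simp only [mem_filter, mem_sdiff]; exact ⟨⟨hw, hS⟩, hb⟩))
  · intro c hc d hd
    rw [hAdB] at hc
    rw [hBdA] at hd
    simp only [mem_filter, mem_sdiff] at hc hd
    constructor
    · intro hmem
      rcases hcl _ hmem with h | h | h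
      · exact hc.1.2 h
      · exact hd.1.2 h
      · have h1 := hc.2
        have h2 := hd.2
        rw [show reg (c, d).1 = reg c from rfl, show reg (c, d).2 = reg d from rfl] at h
        rw [h, h2] at h1
        cases h1
    · intro hmem
      rcases hcl _ hmem with h | h | h
      · exact hd.1.2 h
      · exact hc.1.2 h
      · have h1 := hc.2
        have h2 := hd.2
        rw [show reg (d, c).1 = reg d from rfl, show reg (d, c).2 = reg c from rfl] at h
        rw [← h, h2] at h1
        cases h1
  · rw [hAiB]; exact hSc
  · rw [hAdB]
    have := hcardT true
    rw [hbs0, hbs1, hbs2, hbs3] at this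
    have he : ∀ (b : Bool) (c : ℕ), (if b = true then c else 0) = (if b then c else 0) := by
      intro b c; cases b <;> simp
    rw [he b0, he b1, he b2, he b3] at this
    omega
  · rw [hBdA]
    have := hcardT false
    rw [hbs0, hbs1, hbs2, hbs3] at this
    have he : ∀ (b : Bool) (c : ℕ), (if b = false then c else 0) = (if b then 0 else c) := by
      intro b c; cases b <;> simp
    rw [he b0, he b1, he b2, he b3] at this
    omega


/-- Cut along a balanced edge `e`: separator is the endpoints of `e`
plus one endpoint of each edge crossing `e`. -/
lemma cutA (k : ℕ) (t : Finset V) (ρ : V → ℕ) (hinj : Function.Injective ρ)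
    (E : Finset (V × V)) (hE1 : ∀ f ∈ E, f.1 ∈ t ∧ f.2 ∈ t ∧ ρ f.1 < ρ f.2)
    (hE2 : ∀ e ∈ E, (E.filter fun f => f ≠ e ∧ Icross ρ e f).card ≤ k)
    (e : V × V) (he : e ∈ E)
    (hbal1 : 3 * cntc t ρ (ρ e.1) (ρ e.2) ≤ 2 * t.card)
    (hbal2 : 3 * (lowc t ρ (ρ e.1) + hic t ρ (ρ e.2)) ≤ 2 * t.card) :
    SepGoal k t E := by
  obtain ⟨he1, he2, helt⟩ := hE1 e he
  set S : Finset V := insert e.1 (insert e.2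
    ((E.filter fun f => f ≠ e ∧ Icross ρ e f).image Prod.fst)) with hS
  have hcross : ∀ f ∈ E, f ≠ e → Icross ρ e f → f.1 ∈ S := by
    intro f hf hne hic
    rw [hS]
    exact mem_insert_of_mem (mem_insert_of_mem
      (mem_image_of_mem _ (mem_filter.mpr ⟨hf, hne, hic⟩)))
  have hSnotmem : ∀ w, w ∉ S → w ≠ e.1 ∧ w ≠ e.2 := by
    intro w hw
    rw [hS] at hw
    simp only [mem_insert] at hw
    push_neg at hw
    exact ⟨hw.1, hw.2.1⟩
  refine master k t E S ?_ ?_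
    (fun w => if ρ e.1 < ρ w ∧ ρ w < ρ e.2 then 1 else 0) ?_ ?_ ?_
  · -- S ⊆ t
    rw [hS]
    apply insert_subset he1
    apply insert_subset he2
    intro w hw
    simp only [mem_image, mem_filter] at hw
    obtain ⟨f, ⟨hf, _⟩, rfl⟩ := hw
    exact (hE1 f hf).1
  · -- card
    have c1 := card_insert_le e.1 (insert e.2
      ((E.filter fun f => f ≠ e ∧ Icross ρ e f).image Prod.fst))
    have c2 := card_insert_le e.2 ((E.filter fun f => f ≠ e ∧ Icross ρ e f).image Prod.fst)
    have c3 := card_image_le (s := E.filter fun f => f ≠ e ∧ Icross ρ e f) (f := Prod.fst)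
    have c4 := hE2 e he
    rw [hS]
    omega
  · -- hreg
    intro w _ _
    beta_reduce
    split <;> omega
  · -- sizes
    intro i
    beta_reduce
    match i with
    | 1 =>
      have hsub : ((t \ S).filter (fun w =>
          (if ρ e.1 < ρ w ∧ ρ w < ρ e.2 then 1 else 0) = 1)) ⊆
          t.filter (fun w => ρ e.1 < ρ w ∧ ρ w < ρ e.2) := by
        intro w hw
        simp only [mem_filter, mem_sdiff] at hw ⊢
        refine ⟨hw.1.1, ?_⟩
        rcases hw with ⟨_, hw2⟩
        split at hw2
        · assumption
        · omega
      have := card_le_card hsub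
      have hcc : cntc t ρ (ρ e.1) (ρ e.2)
          = (t.filter fun w => ρ e.1 < ρ w ∧ ρ w < ρ e.2).card := rfl
      omega
    | 0 =>
      have hsub : ((t \ S).filter (fun w =>
          (if ρ e.1 < ρ w ∧ ρ w < ρ e.2 then 1 else 0) = 0)) ⊆
          t.filter (fun w => ρ w < ρ e.1 ∨ ρ e.2 < ρ w) := by
        intro w hw
        simp only [mem_filter, mem_sdiff] at hw ⊢
        obtain ⟨⟨hwt, hwS⟩, hw2⟩ := hw
        obtain ⟨hne1, hne2⟩ := hSnotmem w hwS
        have hρ1 : ρ w ≠ ρ e.1 := fun h => hne1 (hinj h)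
        have hρ2 : ρ w ≠ ρ e.2 := fun h => hne2 (hinj h)
        refine ⟨hwt, ?_⟩
        split at hw2
        · omega
        · omega
      have := card_le_card hsub
      rw [out_card t ρ hinj _ _ helt.le] at this
      omega
    | (n+2) =>
      have hempty : ((t \ S).filter (fun w =>
          (if ρ e.1 < ρ w ∧ ρ w < ρ e.2 then 1 else 0) = n+2)) = ∅ := by
        rw [filter_eq_empty_iff]
        intro w _
        split <;> omega
      rw [hempty]
      simp
  · -- closedness
    intro f hf
    obtain ⟨hf1, hf2, hflt⟩ := hE1 f hf
    by_contra hcon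
    push_neg at hcon
    obtain ⟨hc1, hc2, hc3⟩ := hcon
    obtain ⟨hne11, hne12⟩ := hSnotmem f.1 hc1
    obtain ⟨hne21, hne22⟩ := hSnotmem f.2 hc2
    have hρ11 : ρ f.1 ≠ ρ e.1 := fun h => hne11 (hinj h)
    have hρ12 : ρ f.1 ≠ ρ e.2 := fun h => hne12 (hinj h)
    have hρ21 : ρ f.2 ≠ ρ e.1 := fun h => hne21 (hinj h)
    have hρ22 : ρ f.2 ≠ ρ e.2 := fun h => hne22 (hinj h)
    have hfne : f ≠ e := by
      intro h; rw [h] at hne11; exact hne11 rfl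
    have hS1 : f.1 ∉ S := hc1
    apply hc3
    by_cases h1 : ρ e.1 < ρ f.1 ∧ ρ f.1 < ρ e.2 <;>
      by_cases h2 : ρ e.1 < ρ f.2 ∧ ρ f.2 < ρ e.2
    · simp [h1, h2]
    · -- f.1 inside, f.2 outside
      exfalso
      have : ρ e.2 < ρ f.2 := by omega
      exact hS1 (hcross f hf hfne (Or.inl ⟨h1.1, h1.2, this⟩))
    · -- f.1 outside, f.2 inside
      exfalso
      have : ρ f.1 < ρ e.1 := by omega
      exact hS1 (hcross f hf hfne (Or.inr ⟨this, by omega, h2.2⟩))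
    · simp [h1, h2]


/-- Cut along the chord `(u,v)` when few edges cross it. -/
lemma cut3 (k : ℕ) (t : Finset V) (ρ : V → ℕ) (hinj : Function.Injective ρ)
    (E : Finset (V × V)) (hE1 : ∀ f ∈ E, f.1 ∈ t ∧ f.2 ∈ t ∧ ρ f.1 < ρ f.2)
    (u v : V) (hu : u ∈ t) (hv : v ∈ t) (huv : ρ u < ρ v)
    (humin : ∀ w ∈ t, ρ u ≤ ρ w)
    (hsP : 3 * cntc t ρ (ρ u) (ρ v) ≤ 2 * t.card)
    (hsQ : 3 * hic t ρ (ρ v) ≤ 2 * t.card)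
    (hF : (E.filter (fun f => ρ u < ρ f.1 ∧ ρ f.1 < ρ v ∧ ρ v < ρ f.2)).card ≤ 2*k+1) :
    SepGoal k t E := by
  set F : Finset (V × V) := E.filter (fun f => ρ u < ρ f.1 ∧ ρ f.1 < ρ v ∧ ρ v < ρ f.2) with hFdef
  set S : Finset V := insert u (insert v (F.image Prod.fst)) with hS
  have hSnotmem : ∀ w, w ∉ S → w ≠ u ∧ w ≠ v := by
    intro w hw
    rw [hS] at hw
    simp only [mem_insert] at hw
    push_neg at hw
    exact ⟨hw.1, hw.2.1⟩
  refine master k t E S ?_ ?_ (fun w => if ρ w < ρ v then 0 else 1) ?_ ?_ ?_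
  · rw [hS]
    apply insert_subset hu
    apply insert_subset hv
    intro w hw
    simp only [hFdef, mem_image, mem_filter] at hw
    obtain ⟨f, ⟨hf, _⟩, rfl⟩ := hw
    exact (hE1 f hf).1
  · have c1 := card_insert_le u (insert v (F.image Prod.fst))
    have c2 := card_insert_le v (F.image Prod.fst)
    have c3 := card_image_le (s := F) (f := Prod.fst)
    rw [hS]
    omega
  · intro w _ _
    beta_reduce
    split <;> omega
  · intro i
    beta_reduce
    match i with
    | 0 =>
      have hsub : ((t \ S).filter (fun w => (if ρ w < ρ v then 0 else 1) = 0)) ⊆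
          t.filter (fun w => ρ u < ρ w ∧ ρ w < ρ v) := by
        intro w hw
        simp only [mem_filter, mem_sdiff] at hw ⊢
        obtain ⟨⟨hwt, hwS⟩, hw2⟩ := hw
        obtain ⟨hne1, _⟩ := hSnotmem w hwS
        have hρ1 : ρ w ≠ ρ u := fun h => hne1 (hinj h)
        have := humin w hwt
        refine ⟨hwt, by omega, ?_⟩
        split at hw2
        · assumption
        · omega
      have := card_le_card hsub
      have hcc : cntc t ρ (ρ u) (ρ v)
          = (t.filter fun w => ρ u < ρ w ∧ ρ w < ρ v).card := rfl
      omega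
    | 1 =>
      have hsub : ((t \ S).filter (fun w => (if ρ w < ρ v then 0 else 1) = 1)) ⊆
          t.filter (fun w => ρ v < ρ w) := by
        intro w hw
        simp only [mem_filter, mem_sdiff] at hw ⊢
        obtain ⟨⟨hwt, hwS⟩, hw2⟩ := hw
        obtain ⟨_, hne2⟩ := hSnotmem w hwS
        have hρ2 : ρ w ≠ ρ v := fun h => hne2 (hinj h)
        refine ⟨hwt, ?_⟩
        split at hw2
        · omega
        · omega
      have := card_le_card hsub
      have hcc : hic t ρ (ρ v) = (t.filter fun w => ρ v < ρ w).card := rfl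
      omega
    | (n+2) =>
      have hempty : ((t \ S).filter (fun w => (if ρ w < ρ v then 0 else 1) = n+2)) = ∅ := by
        rw [filter_eq_empty_iff]
        intro w _
        split <;> omega
      rw [hempty]
      simp
  · intro f hf
    obtain ⟨hf1, hf2, hflt⟩ := hE1 f hf
    by_contra hcon
    push_neg at hcon
    obtain ⟨hc1, hc2, hc3⟩ := hcon
    obtain ⟨hne11, hne12⟩ := hSnotmem f.1 hc1
    obtain ⟨hne21, hne22⟩ := hSnotmem f.2 hc2
    have hρ11 : ρ f.1 ≠ ρ u := fun h => hne11 (hinj h)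
    have hρ12 : ρ f.1 ≠ ρ v := fun h => hne12 (hinj h)
    have hρ22 : ρ f.2 ≠ ρ v := fun h => hne22 (hinj h)
    have hmin1 := humin f.1 hf1
    apply hc3
    beta_reduce
    by_cases c1 : ρ f.1 < ρ v <;> by_cases c2 : ρ f.2 < ρ v
    · rw [if_pos c1, if_pos c2]
    · exfalso
      apply hc1
      have : f ∈ F := by
        rw [hFdef]
        exact mem_filter.mpr ⟨hf, by omega, by omega, by omega⟩
      rw [hS]
      exact mem_insert_of_mem (mem_insert_of_mem (mem_image_of_mem _ this))
    · omega
    · rw [if_neg c1, if_neg c2]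

/-- Cut around the maximal `u`-hugging edge `g` when all crossing edges hug `u`. -/
lemma cut4 (k : ℕ) (t : Finset V) (ρ : V → ℕ) (hinj : Function.Injective ρ)
    (E : Finset (V × V)) (hE1 : ∀ f ∈ E, f.1 ∈ t ∧ f.2 ∈ t ∧ ρ f.1 < ρ f.2)
    (hE2 : ∀ e ∈ E, (E.filter fun f => f ≠ e ∧ Icross ρ e f).card ≤ k)
    (u v : V) (hv : v ∈ t) (huv : ρ u < ρ v)
    (humin : ∀ w ∈ t, ρ u ≤ ρ w)
    (g : V × V) (hg : g ∈ E)
    (hgP : ρ u < ρ g.1 ∧ ρ g.1 < ρ v ∧ ρ v < ρ g.2)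
    (hgmax : ∀ f ∈ E, (ρ u < ρ f.1 ∧ ρ f.1 < ρ v ∧ ρ v < ρ f.2) → ρ f.1 ≤ ρ g.1)
    (hsP : 3 * cntc t ρ (ρ u) (ρ v) ≤ 2 * t.card)
    (hsQ : 3 * hic t ρ (ρ v) ≤ 2 * t.card)
    (hout : 3 * (lowc t ρ (ρ g.1) + hic t ρ (ρ g.2)) ≤ 2 * t.card) :
    SepGoal k t E := by
  obtain ⟨hg1, hg2, hglt⟩ := hE1 g hg
  set S : Finset V := insert g.1 (insert g.2 (insert v
    ((E.filter fun f => f ≠ g ∧ Icross ρ g f).image Prod.fst))) with hS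
  have hcross : ∀ f ∈ E, f ≠ g → Icross ρ g f → f.1 ∈ S := by
    intro f hf hne hic
    rw [hS]
    exact mem_insert_of_mem (mem_insert_of_mem (mem_insert_of_mem
      (mem_image_of_mem _ (mem_filter.mpr ⟨hf, hne, hic⟩))))
  have hSnotmem : ∀ w, w ∉ S → w ≠ g.1 ∧ w ≠ g.2 ∧ w ≠ v := by
    intro w hw
    rw [hS] at hw
    simp only [mem_insert] at hw
    push_neg at hw
    exact ⟨hw.1, hw.2.1, hw.2.2.1⟩
  refine master k t E S ?_ ?_
    (fun w => if ρ g.1 < ρ w ∧ ρ w < ρ v then 1 else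
      if ρ v < ρ w ∧ ρ w < ρ g.2 then 2 else 0) ?_ ?_ ?_
  · rw [hS]
    apply insert_subset hg1
    apply insert_subset hg2
    apply insert_subset hv
    intro w hw
    simp only [mem_image, mem_filter] at hw
    obtain ⟨f, ⟨hf, _⟩, rfl⟩ := hw
    exact (hE1 f hf).1
  · have c1 := card_insert_le g.1 (insert g.2 (insert v
      ((E.filter fun f => f ≠ g ∧ Icross ρ g f).image Prod.fst)))
    have c2 := card_insert_le g.2 (insert v
      ((E.filter fun f => f ≠ g ∧ Icross ρ g f).image Prod.fst))
    have c3 := card_insert_le v ((E.filter fun f => f ≠ g ∧ Icross ρ g f).image Prod.fst)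
    have c4 := card_image_le (s := E.filter fun f => f ≠ g ∧ Icross ρ g f) (f := Prod.fst)
    have c5 := hE2 g hg
    rw [hS]
    omega
  · intro w _ _
    beta_reduce
    split
    · omega
    · split <;> omega
  · intro i
    beta_reduce
    match i with
    | 1 =>
      have hsub : ((t \ S).filter (fun w => (if ρ g.1 < ρ w ∧ ρ w < ρ v then 1 else
          if ρ v < ρ w ∧ ρ w < ρ g.2 then 2 else 0) = 1)) ⊆
          t.filter (fun w => ρ g.1 < ρ w ∧ ρ w < ρ v) := by
        intro w hw
        simp only [mem_filter, mem_sdiff] at hw ⊢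
        obtain ⟨⟨hwt, _⟩, hw2⟩ := hw
        refine ⟨hwt, ?_⟩
        split at hw2
        · assumption
        · split at hw2 <;> omega
      have h1 := card_le_card hsub
      have h2 : (t.filter fun w => ρ g.1 < ρ w ∧ ρ w < ρ v).card = cntc t ρ (ρ g.1) (ρ v) := rfl
      have h3 : cntc t ρ (ρ g.1) (ρ v) ≤ cntc t ρ (ρ u) (ρ v) :=
        cnt_mono t ρ (le_of_lt hgP.1) le_rfl
      omega
    | 2 =>
      have hsub : ((t \ S).filter (fun w => (if ρ g.1 < ρ w ∧ ρ w < ρ v then 1 else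
          if ρ v < ρ w ∧ ρ w < ρ g.2 then 2 else 0) = 2)) ⊆
          t.filter (fun w => ρ v < ρ w ∧ ρ w < ρ g.2) := by
        intro w hw
        simp only [mem_filter, mem_sdiff] at hw ⊢
        obtain ⟨⟨hwt, _⟩, hw2⟩ := hw
        refine ⟨hwt, ?_⟩
        split at hw2
        · omega
        · split at hw2
          · assumption
          · omega
      have h1 := card_le_card hsub
      have h2 : (t.filter fun w => ρ v < ρ w ∧ ρ w < ρ g.2).card = cntc t ρ (ρ v) (ρ g.2) := rfl
      have h3 := cnt_le_hi t ρ (ρ v) (ρ g.2)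
      omega
    | 0 =>
      have hsub : ((t \ S).filter (fun w => (if ρ g.1 < ρ w ∧ ρ w < ρ v then 1 else
          if ρ v < ρ w ∧ ρ w < ρ g.2 then 2 else 0) = 0)) ⊆
          t.filter (fun w => ρ w < ρ g.1 ∨ ρ g.2 < ρ w) := by
        intro w hw
        simp only [mem_filter, mem_sdiff] at hw ⊢
        obtain ⟨⟨hwt, hwS⟩, hw2⟩ := hw
        obtain ⟨hne1, hne2, hne3⟩ := hSnotmem w hwS
        have hρ1 : ρ w ≠ ρ g.1 := fun h => hne1 (hinj h)
        have hρ2 : ρ w ≠ ρ g.2 := fun h => hne2 (hinj h)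
        have hρ3 : ρ w ≠ ρ v := fun h => hne3 (hinj h)
        refine ⟨hwt, ?_⟩
        split at hw2
        · omega
        · split at hw2 <;> omega
      have h1 := card_le_card hsub
      have h2 := out_card t ρ hinj (ρ g.1) (ρ g.2) (le_of_lt hglt)
      omega
    | (n+3) =>
      have hempty : ((t \ S).filter (fun w => (if ρ g.1 < ρ w ∧ ρ w < ρ v then 1 else
          if ρ v < ρ w ∧ ρ w < ρ g.2 then 2 else 0) = n+3)) = ∅ := by
        rw [filter_eq_empty_iff]
        intro w _
        split
        · omega
        · split <;> omega
      rw [hempty]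
      simp
  · intro f hf
    obtain ⟨hf1, hf2, hflt⟩ := hE1 f hf
    by_contra hcon
    push_neg at hcon
    obtain ⟨hc1, hc2, hc3⟩ := hcon
    obtain ⟨hne11, hne12, hne13⟩ := hSnotmem f.1 hc1
    obtain ⟨hne21, hne22, hne23⟩ := hSnotmem f.2 hc2
    have hρ11 : ρ f.1 ≠ ρ g.1 := fun h => hne11 (hinj h)
    have hρ12 : ρ f.1 ≠ ρ g.2 := fun h => hne12 (hinj h)
    have hρ13 : ρ f.1 ≠ ρ v := fun h => hne13 (hinj h)
    have hρ21 : ρ f.2 ≠ ρ g.1 := fun h => hne21 (hinj h)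
    have hρ22 : ρ f.2 ≠ ρ g.2 := fun h => hne22 (hinj h)
    have hρ23 : ρ f.2 ≠ ρ v := fun h => hne23 (hinj h)
    have hmin1 := humin f.1 hf1
    have hmin2 := humin f.2 hf2
    have hfne : f ≠ g := by
      intro h; rw [h] at hne11; exact hne11 rfl
    apply hc3
    beta_reduce
    -- categorize f.1 and f.2
    have hcat1 : (ρ g.1 < ρ f.1 ∧ ρ f.1 < ρ v) ∨ (ρ v < ρ f.1 ∧ ρ f.1 < ρ g.2) ∨
        (ρ f.1 < ρ g.1 ∨ ρ g.2 < ρ f.1) := by omega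
    have hcat2 : (ρ g.1 < ρ f.2 ∧ ρ f.2 < ρ v) ∨ (ρ v < ρ f.2 ∧ ρ f.2 < ρ g.2) ∨
        (ρ f.2 < ρ g.1 ∨ ρ g.2 < ρ f.2) := by omega
    rcases hcat1 with h1 | h1 | h1 <;> rcases hcat2 with h2 | h2 | h2
    · rw [if_pos h1, if_pos h2]
    · -- f.1 in P-part, f.2 in Q-part: f straddles, contradicting maximality of g
      exfalso
      have hstr : ρ u < ρ f.1 ∧ ρ f.1 < ρ v ∧ ρ v < ρ f.2 := by omega
      have := hgmax f hf hstr
      omega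
    · -- f.1 in (g1,v), f.2 outside: f.2 < g1 impossible; f.2 > g2: crosses g
      exfalso
      rcases h2 with h2 | h2
      · omega
      · exact hc1 (hcross f hf hfne (Or.inl ⟨h1.1, by omega, h2⟩))
    · omega
    · rw [if_neg (by omega), if_pos h1, if_neg (by omega), if_pos h2]
    · -- f.1 in (v,g2), f.2 outside: f.2 < g1 impossible; f.2 > g2: crosses g
      exfalso
      rcases h2 with h2 | h2
      · omega
      · exact hc1 (hcross f hf hfne (Or.inl ⟨by omega, by omega, h2⟩))
    · -- f.1 outside, f.2 in (g1,v): f.1 < g1 (since f.1 < f.2 < v < g2): crosses g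
      exfalso
      have h1' : ρ f.1 < ρ g.1 := by omega
      exact hc1 (hcross f hf hfne (Or.inr ⟨h1', by omega, by omega⟩))
    · -- f.1 outside, f.2 in (v,g2): f.1 < g1: crosses g
      exfalso
      have h1' : ρ f.1 < ρ g.1 := by omega
      exact hc1 (hcross f hf hfne (Or.inr ⟨h1', by omega, by omega⟩))
    · rw [if_neg (by omega), if_neg (by omega), if_neg (by omega), if_neg (by omega)]


/-- Cut around the minimal `v`-hugging edge `h` when all crossing edges hug `v`. -/
lemma cut5 (k : ℕ) (t : Finset V) (ρ : V → ℕ) (hinj : Function.Injective ρ)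
    (E : Finset (V × V)) (hE1 : ∀ f ∈ E, f.1 ∈ t ∧ f.2 ∈ t ∧ ρ f.1 < ρ f.2)
    (hE2 : ∀ e ∈ E, (E.filter fun f => f ≠ e ∧ Icross ρ e f).card ≤ k)
    (u v : V) (hu : u ∈ t) (huv : ρ u < ρ v)
    (humin : ∀ w ∈ t, ρ u ≤ ρ w)
    (h : V × V) (hh : h ∈ E)
    (hhP : ρ u < ρ h.1 ∧ ρ h.1 < ρ v ∧ ρ v < ρ h.2)
    (hhmin : ∀ f ∈ E, (ρ u < ρ f.1 ∧ ρ f.1 < ρ v ∧ ρ v < ρ f.2) → ρ h.1 ≤ ρ f.1)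
    (hsP : 3 * cntc t ρ (ρ u) (ρ v) ≤ 2 * t.card)
    (hsQ : 3 * hic t ρ (ρ v) ≤ 2 * t.card)
    (hinn : 3 * cntc t ρ (ρ h.1) (ρ h.2) ≤ 2 * t.card) :
    SepGoal k t E := by
  obtain ⟨hh1, hh2, hhlt⟩ := hE1 h hh
  set S : Finset V := insert u (insert h.1 (insert h.2
    ((E.filter fun f => f ≠ h ∧ Icross ρ h f).image Prod.fst))) with hS
  have hcross : ∀ f ∈ E, f ≠ h → Icross ρ h f → f.1 ∈ S := by
    intro f hf hne hic
    rw [hS]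
    exact mem_insert_of_mem (mem_insert_of_mem (mem_insert_of_mem
      (mem_image_of_mem _ (mem_filter.mpr ⟨hf, hne, hic⟩))))
  have hSnotmem : ∀ w, w ∉ S → w ≠ u ∧ w ≠ h.1 ∧ w ≠ h.2 := by
    intro w hw
    rw [hS] at hw
    simp only [mem_insert] at hw
    push_neg at hw
    exact ⟨hw.1, hw.2.1, hw.2.2.1⟩
  refine master k t E S ?_ ?_
    (fun w => if ρ u < ρ w ∧ ρ w < ρ h.1 then 0 else
      if ρ h.1 < ρ w ∧ ρ w < ρ h.2 then 1 else 2) ?_ ?_ ?_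
  · rw [hS]
    apply insert_subset hu
    apply insert_subset hh1
    apply insert_subset hh2
    intro w hw
    simp only [mem_image, mem_filter] at hw
    obtain ⟨f, ⟨hf, _⟩, rfl⟩ := hw
    exact (hE1 f hf).1
  · have c1 := card_insert_le u (insert h.1 (insert h.2
      ((E.filter fun f => f ≠ h ∧ Icross ρ h f).image Prod.fst)))
    have c2 := card_insert_le h.1 (insert h.2
      ((E.filter fun f => f ≠ h ∧ Icross ρ h f).image Prod.fst))
    have c3 := card_insert_le h.2 ((E.filter fun f => f ≠ h ∧ Icross ρ h f).image Prod.fst)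
    have c4 := card_image_le (s := E.filter fun f => f ≠ h ∧ Icross ρ h f) (f := Prod.fst)
    have c5 := hE2 h hh
    rw [hS]
    omega
  · intro w _ _
    beta_reduce
    split
    · omega
    · split <;> omega
  · intro i
    beta_reduce
    match i with
    | 0 =>
      have hsub : ((t \ S).filter (fun w => (if ρ u < ρ w ∧ ρ w < ρ h.1 then 0 else
          if ρ h.1 < ρ w ∧ ρ w < ρ h.2 then 1 else 2) = 0)) ⊆
          t.filter (fun w => ρ u < ρ w ∧ ρ w < ρ h.1) := by
        intro w hw
        simp only [mem_filter, mem_sdiff] at hw ⊢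
        obtain ⟨⟨hwt, _⟩, hw2⟩ := hw
        refine ⟨hwt, ?_⟩
        split at hw2
        · assumption
        · split at hw2 <;> omega
      have h1 := card_le_card hsub
      have h2 : (t.filter fun w => ρ u < ρ w ∧ ρ w < ρ h.1).card = cntc t ρ (ρ u) (ρ h.1) := rfl
      have h3 : cntc t ρ (ρ u) (ρ h.1) ≤ cntc t ρ (ρ u) (ρ v) :=
        cnt_mono t ρ le_rfl (le_of_lt hhP.2.1)
      omega
    | 1 =>
      have hsub : ((t \ S).filter (fun w => (if ρ u < ρ w ∧ ρ w < ρ h.1 then 0 else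
          if ρ h.1 < ρ w ∧ ρ w < ρ h.2 then 1 else 2) = 1)) ⊆
          t.filter (fun w => ρ h.1 < ρ w ∧ ρ w < ρ h.2) := by
        intro w hw
        simp only [mem_filter, mem_sdiff] at hw ⊢
        obtain ⟨⟨hwt, _⟩, hw2⟩ := hw
        refine ⟨hwt, ?_⟩
        split at hw2
        · omega
        · split at hw2
          · assumption
          · omega
      have h1 := card_le_card hsub
      have h2 : (t.filter fun w => ρ h.1 < ρ w ∧ ρ w < ρ h.2).card
          = cntc t ρ (ρ h.1) (ρ h.2) := rfl
      omega
    | 2 =>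
      have hsub : ((t \ S).filter (fun w => (if ρ u < ρ w ∧ ρ w < ρ h.1 then 0 else
          if ρ h.1 < ρ w ∧ ρ w < ρ h.2 then 1 else 2) = 2)) ⊆
          t.filter (fun w => ρ v < ρ w) := by
        intro w hw
        simp only [mem_filter, mem_sdiff] at hw ⊢
        obtain ⟨⟨hwt, hwS⟩, hw2⟩ := hw
        obtain ⟨hne1, hne2, hne3⟩ := hSnotmem w hwS
        have hρ1 : ρ w ≠ ρ u := fun hq => hne1 (hinj hq)
        have hρ2 : ρ w ≠ ρ h.1 := fun hq => hne2 (hinj hq)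
        have hρ3 : ρ w ≠ ρ h.2 := fun hq => hne3 (hinj hq)
        have := humin w hwt
        refine ⟨hwt, ?_⟩
        split at hw2
        · omega
        · split at hw2
          · omega
          · omega
      have h1 := card_le_card hsub
      have h2 : (t.filter fun w => ρ v < ρ w).card = hic t ρ (ρ v) := rfl
      omega
    | (n+3) =>
      have hempty : ((t \ S).filter (fun w => (if ρ u < ρ w ∧ ρ w < ρ h.1 then 0 else
          if ρ h.1 < ρ w ∧ ρ w < ρ h.2 then 1 else 2) = n+3)) = ∅ := by
        rw [filter_eq_empty_iff]
        intro w _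
        split
        · omega
        · split <;> omega
      rw [hempty]
      simp
  · intro f hf
    obtain ⟨hf1, hf2, hflt⟩ := hE1 f hf
    by_contra hcon
    push_neg at hcon
    obtain ⟨hc1, hc2, hc3⟩ := hcon
    obtain ⟨hne11, hne12, hne13⟩ := hSnotmem f.1 hc1
    obtain ⟨hne21, hne22, hne23⟩ := hSnotmem f.2 hc2
    have hρ11 : ρ f.1 ≠ ρ u := fun hq => hne11 (hinj hq)
    have hρ12 : ρ f.1 ≠ ρ h.1 := fun hq => hne12 (hinj hq)
    have hρ13 : ρ f.1 ≠ ρ h.2 := fun hq => hne13 (hinj hq)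
    have hρ21 : ρ f.2 ≠ ρ u := fun hq => hne21 (hinj hq)
    have hρ22 : ρ f.2 ≠ ρ h.1 := fun hq => hne22 (hinj hq)
    have hρ23 : ρ f.2 ≠ ρ h.2 := fun hq => hne23 (hinj hq)
    have hmin1 := humin f.1 hf1
    have hmin2 := humin f.2 hf2
    have hfne : f ≠ h := by
      intro hq; rw [hq] at hne12; exact hne12 rfl
    apply hc3
    beta_reduce
    have hcat1 : (ρ u < ρ f.1 ∧ ρ f.1 < ρ h.1) ∨ (ρ h.1 < ρ f.1 ∧ ρ f.1 < ρ h.2) ∨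
        (ρ h.2 < ρ f.1) := by omega
    have hcat2 : (ρ u < ρ f.2 ∧ ρ f.2 < ρ h.1) ∨ (ρ h.1 < ρ f.2 ∧ ρ f.2 < ρ h.2) ∨
        (ρ h.2 < ρ f.2) := by omega
    rcases hcat1 with h1 | h1 | h1 <;> rcases hcat2 with h2 | h2 | h2
    · rw [if_pos h1, if_pos h2]
    · -- f.1 in (u,h1), f.2 in (h1,h2): crosses h
      exfalso
      exact hc1 (hcross f hf hfne (Or.inr ⟨h1.2, by omega, h2.2⟩))
    · -- f.1 in (u,h1), f.2 beyond h2: straddling edge with smaller first coordinate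
      exfalso
      have hstr : ρ u < ρ f.1 ∧ ρ f.1 < ρ v ∧ ρ v < ρ f.2 := by omega
      have := hhmin f hf hstr
      omega
    · omega
    · rw [if_neg (by omega), if_pos h1, if_neg (by omega), if_pos h2]
    · -- f.1 in (h1,h2), f.2 beyond h2: crosses h
      exfalso
      exact hc1 (hcross f hf hfne (Or.inl ⟨h1.1, by omega, h2⟩))
    · omega
    · omega
    · rw [if_neg (by omega), if_neg (by omega), if_neg (by omega), if_neg (by omega)]


/-- Parallel cut through two nested onions: edge `g` hugging `u` (maximal), edge `h`
hugging `v` (minimal), with `ρ g.1 ≤ ρ h.1` and `ρ h.2 ≤ ρ g.2`. -/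
lemma cutPar (k : ℕ) (t : Finset V) (ρ : V → ℕ) (hinj : Function.Injective ρ)
    (E : Finset (V × V)) (hE1 : ∀ f ∈ E, f.1 ∈ t ∧ f.2 ∈ t ∧ ρ f.1 < ρ f.2)
    (hE2 : ∀ e ∈ E, (E.filter fun f => f ≠ e ∧ Icross ρ e f).card ≤ k)
    (u v : V) (huv : ρ u < ρ v) (humin : ∀ w ∈ t, ρ u ≤ ρ w)
    (g h : V × V) (hg : g ∈ E) (hh : h ∈ E)
    (hgP : ρ u < ρ g.1 ∧ ρ g.1 < ρ v ∧ ρ v < ρ g.2)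
    (hhP : ρ u < ρ h.1 ∧ ρ h.1 < ρ v ∧ ρ v < ρ h.2)
    (hgFu : ∀ f ∈ E, (ρ u < ρ f.1 ∧ ρ f.1 < ρ v ∧ ρ v < ρ f.2) →
      2 * t.card < 3 * cntc t ρ (ρ f.1) (ρ f.2) → ρ f.1 ≤ ρ g.1)
    (hhFv : ∀ f ∈ E, (ρ u < ρ f.1 ∧ ρ f.1 < ρ v ∧ ρ v < ρ f.2) →
      3 * cntc t ρ (ρ f.1) (ρ f.2) ≤ 2 * t.card → ρ h.1 ≤ ρ f.1)
    (hxx : ρ g.1 ≤ ρ h.1) (hyy : ρ h.2 ≤ ρ g.2)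
    (hsP : 3 * cntc t ρ (ρ u) (ρ v) ≤ 2 * t.card)
    (hR2 : 3 * cntc t ρ (ρ h.1) (ρ g.2) ≤ 2 * t.card)
    (hgout : 3 * (lowc t ρ (ρ g.1) + hic t ρ (ρ g.2)) ≤ 2 * t.card) :
    SepGoal k t E := by
  obtain ⟨hg1, hg2, hglt⟩ := hE1 g hg
  obtain ⟨hh1, hh2, hhlt⟩ := hE1 h hh
  set S : Finset V := insert g.1 (insert g.2 (insert h.1
    (((E.filter fun f => f ≠ g ∧ Icross ρ g f).image Prod.fst) ∪
     ((E.filter fun f => f ≠ h ∧ Icross ρ h f).image Prod.fst)))) with hS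
  have hcrossG : ∀ f ∈ E, f ≠ g → Icross ρ g f → f.1 ∈ S := by
    intro f hf hne hic
    rw [hS]
    exact mem_insert_of_mem (mem_insert_of_mem (mem_insert_of_mem
      (mem_union_left _ (mem_image_of_mem _ (mem_filter.mpr ⟨hf, hne, hic⟩)))))
  have hcrossH : ∀ f ∈ E, f ≠ h → Icross ρ h f → f.1 ∈ S := by
    intro f hf hne hic
    rw [hS]
    exact mem_insert_of_mem (mem_insert_of_mem (mem_insert_of_mem
      (mem_union_right _ (mem_image_of_mem _ (mem_filter.mpr ⟨hf, hne, hic⟩)))))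
  have hSnotmem : ∀ w, w ∉ S → w ≠ g.1 ∧ w ≠ g.2 ∧ w ≠ h.1 := by
    intro w hw
    rw [hS] at hw
    simp only [mem_insert] at hw
    push_neg at hw
    exact ⟨hw.1, hw.2.1, hw.2.2.1⟩
  refine master k t E S ?_ ?_
    (fun w => if ρ g.1 < ρ w ∧ ρ w < ρ h.1 then 1 else
      if ρ h.1 < ρ w ∧ ρ w < ρ g.2 then 2 else 0) ?_ ?_ ?_
  · rw [hS]
    apply insert_subset hg1
    apply insert_subset hg2
    apply insert_subset hh1
    apply union_subset <;>
    · intro w hw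
      simp only [mem_image, mem_filter] at hw
      obtain ⟨f, ⟨hf, _⟩, rfl⟩ := hw
      exact (hE1 f hf).1
  · have c1 := card_insert_le g.1 (insert g.2 (insert h.1
      (((E.filter fun f => f ≠ g ∧ Icross ρ g f).image Prod.fst) ∪
       ((E.filter fun f => f ≠ h ∧ Icross ρ h f).image Prod.fst))))
    have c2 := card_insert_le g.2 (insert h.1
      (((E.filter fun f => f ≠ g ∧ Icross ρ g f).image Prod.fst) ∪
       ((E.filter fun f => f ≠ h ∧ Icross ρ h f).image Prod.fst)))
    have c3 := card_insert_le h.1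
      (((E.filter fun f => f ≠ g ∧ Icross ρ g f).image Prod.fst) ∪
       ((E.filter fun f => f ≠ h ∧ Icross ρ h f).image Prod.fst))
    have c4 := card_union_le ((E.filter fun f => f ≠ g ∧ Icross ρ g f).image Prod.fst)
       ((E.filter fun f => f ≠ h ∧ Icross ρ h f).image Prod.fst)
    have c5 := card_image_le (s := E.filter fun f => f ≠ g ∧ Icross ρ g f) (f := Prod.fst)
    have c6 := card_image_le (s := E.filter fun f => f ≠ h ∧ Icross ρ h f) (f := Prod.fst)
    have c7 := hE2 g hg
    have c8 := hE2 h hh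
    rw [hS]
    omega
  · intro w _ _
    beta_reduce
    split
    · omega
    · split <;> omega
  · intro i
    beta_reduce
    match i with
    | 1 =>
      have hsub : ((t \ S).filter (fun w => (if ρ g.1 < ρ w ∧ ρ w < ρ h.1 then 1 else
          if ρ h.1 < ρ w ∧ ρ w < ρ g.2 then 2 else 0) = 1)) ⊆
          t.filter (fun w => ρ g.1 < ρ w ∧ ρ w < ρ h.1) := by
        intro w hw
        simp only [mem_filter, mem_sdiff] at hw ⊢
        obtain ⟨⟨hwt, _⟩, hw2⟩ := hw
        refine ⟨hwt, ?_⟩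
        split at hw2
        · assumption
        · split at hw2 <;> omega
      have h1 := card_le_card hsub
      have h2 : (t.filter fun w => ρ g.1 < ρ w ∧ ρ w < ρ h.1).card
          = cntc t ρ (ρ g.1) (ρ h.1) := rfl
      have h3 : cntc t ρ (ρ g.1) (ρ h.1) ≤ cntc t ρ (ρ u) (ρ v) :=
        cnt_mono t ρ (le_of_lt hgP.1) (le_of_lt hhP.2.1)
      omega
    | 2 =>
      have hsub : ((t \ S).filter (fun w => (if ρ g.1 < ρ w ∧ ρ w < ρ h.1 then 1 else
          if ρ h.1 < ρ w ∧ ρ w < ρ g.2 then 2 else 0) = 2)) ⊆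
          t.filter (fun w => ρ h.1 < ρ w ∧ ρ w < ρ g.2) := by
        intro w hw
        simp only [mem_filter, mem_sdiff] at hw ⊢
        obtain ⟨⟨hwt, _⟩, hw2⟩ := hw
        refine ⟨hwt, ?_⟩
        split at hw2
        · omega
        · split at hw2
          · assumption
          · omega
      have h1 := card_le_card hsub
      have h2 : (t.filter fun w => ρ h.1 < ρ w ∧ ρ w < ρ g.2).card
          = cntc t ρ (ρ h.1) (ρ g.2) := rfl
      omega
    | 0 =>
      have hsub : ((t \ S).filter (fun w => (if ρ g.1 < ρ w ∧ ρ w < ρ h.1 then 1 else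
          if ρ h.1 < ρ w ∧ ρ w < ρ g.2 then 2 else 0) = 0)) ⊆
          t.filter (fun w => ρ w < ρ g.1 ∨ ρ g.2 < ρ w) := by
        intro w hw
        simp only [mem_filter, mem_sdiff] at hw ⊢
        obtain ⟨⟨hwt, hwS⟩, hw2⟩ := hw
        obtain ⟨hne1, hne2, hne3⟩ := hSnotmem w hwS
        have hρ1 : ρ w ≠ ρ g.1 := fun hq => hne1 (hinj hq)
        have hρ2 : ρ w ≠ ρ g.2 := fun hq => hne2 (hinj hq)
        have hρ3 : ρ w ≠ ρ h.1 := fun hq => hne3 (hinj hq)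
        have hq1 : ρ h.1 < ρ g.2 := by omega
        refine ⟨hwt, ?_⟩
        split at hw2
        · omega
        · split at hw2 <;> omega
      have h1 := card_le_card hsub
      have h2 := out_card t ρ hinj (ρ g.1) (ρ g.2) (le_of_lt hglt)
      omega
    | (n+3) =>
      have hempty : ((t \ S).filter (fun w => (if ρ g.1 < ρ w ∧ ρ w < ρ h.1 then 1 else
          if ρ h.1 < ρ w ∧ ρ w < ρ g.2 then 2 else 0) = n+3)) = ∅ := by
        rw [filter_eq_empty_iff]
        intro w _
        split
        · omega
        · split <;> omega
      rw [hempty]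
      simp
  · intro f hf
    obtain ⟨hf1, hf2, hflt⟩ := hE1 f hf
    by_contra hcon
    push_neg at hcon
    obtain ⟨hc1, hc2, hc3⟩ := hcon
    obtain ⟨hne11, hne12, hne13⟩ := hSnotmem f.1 hc1
    obtain ⟨hne21, hne22, hne23⟩ := hSnotmem f.2 hc2
    have hρ11 : ρ f.1 ≠ ρ g.1 := fun hq => hne11 (hinj hq)
    have hρ12 : ρ f.1 ≠ ρ g.2 := fun hq => hne12 (hinj hq)
    have hρ13 : ρ f.1 ≠ ρ h.1 := fun hq => hne13 (hinj hq)
    have hρ21 : ρ f.2 ≠ ρ g.1 := fun hq => hne21 (hinj hq)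
    have hρ22 : ρ f.2 ≠ ρ g.2 := fun hq => hne22 (hinj hq)
    have hρ23 : ρ f.2 ≠ ρ h.1 := fun hq => hne23 (hinj hq)
    have hmin1 := humin f.1 hf1
    have hmin2 := humin f.2 hf2
    have hfneG : f ≠ g := by
      intro hq; rw [hq] at hne11; exact hne11 rfl
    have hfneH : f ≠ h := by
      intro hq; rw [hq] at hne13; exact hne13 rfl
    apply hc3
    beta_reduce
    have hcat1 : (ρ g.1 < ρ f.1 ∧ ρ f.1 < ρ h.1) ∨ (ρ h.1 < ρ f.1 ∧ ρ f.1 < ρ g.2) ∨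
        (ρ f.1 < ρ g.1 ∨ ρ g.2 < ρ f.1) := by omega
    have hcat2 : (ρ g.1 < ρ f.2 ∧ ρ f.2 < ρ h.1) ∨ (ρ h.1 < ρ f.2 ∧ ρ f.2 < ρ g.2) ∨
        (ρ f.2 < ρ g.1 ∨ ρ g.2 < ρ f.2) := by omega
    rcases hcat1 with h1 | h1 | h1 <;> rcases hcat2 with h2 | h2 | h2
    · rw [if_pos h1, if_pos h2]
    · -- f.1 ∈ (g1,h1), f.2 ∈ (h1,g2)
      exfalso
      by_cases hyh : ρ f.2 < ρ h.2
      · exact hc1 (hcrossH f hf hfneH (Or.inr ⟨by omega, h2.1, hyh⟩))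
      · -- f straddles (u,v); contradict extremality on either side
        have hstr : ρ u < ρ f.1 ∧ ρ f.1 < ρ v ∧ ρ v < ρ f.2 := by omega
        by_cases hcnt : 2 * t.card < 3 * cntc t ρ (ρ f.1) (ρ f.2)
        · have := hgFu f hf hstr hcnt
          omega
        · have := hhFv f hf hstr (by omega)
          omega
    · -- f.1 ∈ (g1,h1), f.2 outside
      exfalso
      rcases h2 with h2 | h2
      · omega
      · exact hc1 (hcrossG f hf hfneG (Or.inl ⟨h1.1, by omega, h2⟩))
    · omega
    · rw [if_neg (by omega), if_pos h1, if_neg (by omega), if_pos h2]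
    · -- f.1 ∈ (h1,g2), f.2 outside
      exfalso
      rcases h2 with h2 | h2
      · omega
      · exact hc1 (hcrossG f hf hfneG (Or.inl ⟨by omega, h1.2, h2⟩))
    · -- f.1 outside, f.2 ∈ (g1,h1)
      exfalso
      have h1' : ρ f.1 < ρ g.1 := by omega
      exact hc1 (hcrossG f hf hfneG (Or.inr ⟨h1', by omega, by omega⟩))
    · -- f.1 outside, f.2 ∈ (h1,g2)
      exfalso
      have h1' : ρ f.1 < ρ g.1 := by omega
      exact hc1 (hcrossG f hf hfneG (Or.inr ⟨h1', by omega, by omega⟩))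
    · rw [if_neg (by omega), if_neg (by omega), if_neg (by omega), if_neg (by omega)]

/-- X-cut along a crossing pair of edges `α`, `β`. -/
lemma cutX (k : ℕ) (t : Finset V) (ρ : V → ℕ) (hinj : Function.Injective ρ)
    (E : Finset (V × V)) (hE1 : ∀ f ∈ E, f.1 ∈ t ∧ f.2 ∈ t ∧ ρ f.1 < ρ f.2)
    (hE2 : ∀ e ∈ E, (E.filter fun f => f ≠ e ∧ Icross ρ e f).card ≤ k)
    (α β : V × V) (hα : α ∈ E) (hβ : β ∈ E)
    (hab1 : ρ α.1 < ρ β.1) (hab2 : ρ β.1 < ρ α.2) (hab3 : ρ α.2 < ρ β.2)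
    (hQ1 : 3 * cntc t ρ (ρ α.1) (ρ β.1) ≤ 2 * t.card)
    (hQ2 : 3 * cntc t ρ (ρ β.1) (ρ α.2) ≤ 2 * t.card)
    (hQ3 : 3 * cntc t ρ (ρ α.2) (ρ β.2) ≤ 2 * t.card)
    (hQ4 : 3 * (lowc t ρ (ρ α.1) + hic t ρ (ρ β.2)) ≤ 2 * t.card) :
    SepGoal k t E := by
  obtain ⟨ha1, ha2, halt⟩ := hE1 α hα
  obtain ⟨hb1, hb2, hblt⟩ := hE1 β hβ
  have hne_ab : β ≠ α := by
    intro hq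
    rw [hq] at hab1
    omega
  have hβCα : β ∈ (E.filter fun f => f ≠ α ∧ Icross ρ α f) :=
    mem_filter.mpr ⟨hβ, hne_ab, Or.inl ⟨hab1, hab2, hab3⟩⟩
  have hαCβ : α ∈ (E.filter fun f => f ≠ β ∧ Icross ρ β f) :=
    mem_filter.mpr ⟨hα, fun hq => hne_ab hq.symm, Or.inr ⟨hab1, hab2, hab3⟩⟩
  set S : Finset V := insert α.1 (insert α.2 (insert β.1 (insert β.2
    ((((E.filter fun f => f ≠ α ∧ Icross ρ α f).erase β) ∪
     ((E.filter fun f => f ≠ β ∧ Icross ρ β f).erase α)).image Prod.fst)))) with hS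
  have hcross : ∀ f ∈ E, f ≠ α → f ≠ β → (Icross ρ α f ∨ Icross ρ β f) → f.1 ∈ S := by
    intro f hf hneα hneβ hic
    rw [hS]
    apply mem_insert_of_mem (mem_insert_of_mem (mem_insert_of_mem (mem_insert_of_mem _)))
    apply mem_image_of_mem
    rcases hic with hic | hic
    · exact mem_union_left _ (mem_erase.mpr ⟨hneβ, mem_filter.mpr ⟨hf, hneα, hic⟩⟩)
    · exact mem_union_right _ (mem_erase.mpr ⟨hneα, mem_filter.mpr ⟨hf, hneβ, hic⟩⟩)
  have hSnotmem : ∀ w, w ∉ S → w ≠ α.1 ∧ w ≠ α.2 ∧ w ≠ β.1 ∧ w ≠ β.2 := by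
    intro w hw
    rw [hS] at hw
    simp only [mem_insert] at hw
    push_neg at hw
    exact ⟨hw.1, hw.2.1, hw.2.2.1, hw.2.2.2.1⟩
  refine master k t E S ?_ ?_
    (fun w => if ρ α.1 < ρ w ∧ ρ w < ρ β.1 then 1 else
      if ρ β.1 < ρ w ∧ ρ w < ρ α.2 then 2 else
      if ρ α.2 < ρ w ∧ ρ w < ρ β.2 then 3 else 0) ?_ ?_ ?_
  · rw [hS]
    apply insert_subset ha1
    apply insert_subset ha2
    apply insert_subset hb1
    apply insert_subset hb2
    intro w hw
    simp only [mem_image, mem_union, mem_erase, mem_filter] at hw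
    obtain ⟨f, hf, rfl⟩ := hw
    rcases hf with ⟨_, hf, _⟩ | ⟨_, hf, _⟩ <;> exact (hE1 f hf).1
  · have c1 := card_insert_le α.1 (insert α.2 (insert β.1 (insert β.2
      ((((E.filter fun f => f ≠ α ∧ Icross ρ α f).erase β) ∪
       ((E.filter fun f => f ≠ β ∧ Icross ρ β f).erase α)).image Prod.fst))))
    have c2 := card_insert_le α.2 (insert β.1 (insert β.2
      ((((E.filter fun f => f ≠ α ∧ Icross ρ α f).erase β) ∪
       ((E.filter fun f => f ≠ β ∧ Icross ρ β f).erase α)).image Prod.fst)))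
    have c3 := card_insert_le β.1 (insert β.2
      ((((E.filter fun f => f ≠ α ∧ Icross ρ α f).erase β) ∪
       ((E.filter fun f => f ≠ β ∧ Icross ρ β f).erase α)).image Prod.fst))
    have c4 := card_insert_le β.2
      ((((E.filter fun f => f ≠ α ∧ Icross ρ α f).erase β) ∪
       ((E.filter fun f => f ≠ β ∧ Icross ρ β f).erase α)).image Prod.fst)
    have c5 := card_image_le (s := ((E.filter fun f => f ≠ α ∧ Icross ρ α f).erase β) ∪
       ((E.filter fun f => f ≠ β ∧ Icross ρ β f).erase α)) (f := Prod.fst)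
    have c6 := card_union_le ((E.filter fun f => f ≠ α ∧ Icross ρ α f).erase β)
       ((E.filter fun f => f ≠ β ∧ Icross ρ β f).erase α)
    have c7 := card_erase_add_one hβCα
    have c8 := card_erase_add_one hαCβ
    have c9 := hE2 α hα
    have c10 := hE2 β hβ
    rw [hS]
    omega
  · intro w _ _
    beta_reduce
    split
    · omega
    · split
      · omega
      · split <;> omega
  · intro i
    beta_reduce
    match i with
    | 1 =>
      have hsub : ((t \ S).filter (fun w => (if ρ α.1 < ρ w ∧ ρ w < ρ β.1 then 1 else
          if ρ β.1 < ρ w ∧ ρ w < ρ α.2 then 2 else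
          if ρ α.2 < ρ w ∧ ρ w < ρ β.2 then 3 else 0) = 1)) ⊆
          t.filter (fun w => ρ α.1 < ρ w ∧ ρ w < ρ β.1) := by
        intro w hw
        simp only [mem_filter, mem_sdiff] at hw ⊢
        obtain ⟨⟨hwt, _⟩, hw2⟩ := hw
        refine ⟨hwt, ?_⟩
        split at hw2
        · assumption
        · split at hw2
          · omega
          · split at hw2 <;> omega
      have h1 := card_le_card hsub
      have h2 : (t.filter fun w => ρ α.1 < ρ w ∧ ρ w < ρ β.1).card
          = cntc t ρ (ρ α.1) (ρ β.1) := rfl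
      omega
    | 2 =>
      have hsub : ((t \ S).filter (fun w => (if ρ α.1 < ρ w ∧ ρ w < ρ β.1 then 1 else
          if ρ β.1 < ρ w ∧ ρ w < ρ α.2 then 2 else
          if ρ α.2 < ρ w ∧ ρ w < ρ β.2 then 3 else 0) = 2)) ⊆
          t.filter (fun w => ρ β.1 < ρ w ∧ ρ w < ρ α.2) := by
        intro w hw
        simp only [mem_filter, mem_sdiff] at hw ⊢
        obtain ⟨⟨hwt, _⟩, hw2⟩ := hw
        refine ⟨hwt, ?_⟩
        split at hw2
        · omega
        · split at hw2
          · assumption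
          · split at hw2 <;> omega
      have h1 := card_le_card hsub
      have h2 : (t.filter fun w => ρ β.1 < ρ w ∧ ρ w < ρ α.2).card
          = cntc t ρ (ρ β.1) (ρ α.2) := rfl
      omega
    | 3 =>
      have hsub : ((t \ S).filter (fun w => (if ρ α.1 < ρ w ∧ ρ w < ρ β.1 then 1 else
          if ρ β.1 < ρ w ∧ ρ w < ρ α.2 then 2 else
          if ρ α.2 < ρ w ∧ ρ w < ρ β.2 then 3 else 0) = 3)) ⊆
          t.filter (fun w => ρ α.2 < ρ w ∧ ρ w < ρ β.2) := by
        intro w hw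
        simp only [mem_filter, mem_sdiff] at hw ⊢
        obtain ⟨⟨hwt, _⟩, hw2⟩ := hw
        refine ⟨hwt, ?_⟩
        split at hw2
        · omega
        · split at hw2
          · omega
          · split at hw2
            · assumption
            · omega
      have h1 := card_le_card hsub
      have h2 : (t.filter fun w => ρ α.2 < ρ w ∧ ρ w < ρ β.2).card
          = cntc t ρ (ρ α.2) (ρ β.2) := rfl
      omega
    | 0 =>
      have hsub : ((t \ S).filter (fun w => (if ρ α.1 < ρ w ∧ ρ w < ρ β.1 then 1 else
          if ρ β.1 < ρ w ∧ ρ w < ρ α.2 then 2 else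
          if ρ α.2 < ρ w ∧ ρ w < ρ β.2 then 3 else 0) = 0)) ⊆
          t.filter (fun w => ρ w < ρ α.1 ∨ ρ β.2 < ρ w) := by
        intro w hw
        simp only [mem_filter, mem_sdiff] at hw ⊢
        obtain ⟨⟨hwt, hwS⟩, hw2⟩ := hw
        obtain ⟨hne1, hne2, hne3, hne4⟩ := hSnotmem w hwS
        have hρ1 : ρ w ≠ ρ α.1 := fun hq => hne1 (hinj hq)
        have hρ2 : ρ w ≠ ρ α.2 := fun hq => hne2 (hinj hq)
        have hρ3 : ρ w ≠ ρ β.1 := fun hq => hne3 (hinj hq)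
        have hρ4 : ρ w ≠ ρ β.2 := fun hq => hne4 (hinj hq)
        refine ⟨hwt, ?_⟩
        split at hw2
        · omega
        · split at hw2
          · omega
          · split at hw2 <;> omega
      have h1 := card_le_card hsub
      have h2 := out_card t ρ hinj (ρ α.1) (ρ β.2) (by omega)
      omega
    | (n+4) =>
      have hempty : ((t \ S).filter (fun w => (if ρ α.1 < ρ w ∧ ρ w < ρ β.1 then 1 else
          if ρ β.1 < ρ w ∧ ρ w < ρ α.2 then 2 else
          if ρ α.2 < ρ w ∧ ρ w < ρ β.2 then 3 else 0) = n+4)) = ∅ := by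
        rw [filter_eq_empty_iff]
        intro w _
        split
        · omega
        · split
          · omega
          · split <;> omega
      rw [hempty]
      simp
  · intro f hf
    obtain ⟨hf1, hf2, hflt⟩ := hE1 f hf
    by_contra hcon
    push_neg at hcon
    obtain ⟨hc1, hc2, hc3⟩ := hcon
    obtain ⟨hne11, hne12, hne13, hne14⟩ := hSnotmem f.1 hc1
    obtain ⟨hne21, hne22, hne23, hne24⟩ := hSnotmem f.2 hc2
    have hρ11 : ρ f.1 ≠ ρ α.1 := fun hq => hne11 (hinj hq)
    have hρ12 : ρ f.1 ≠ ρ α.2 := fun hq => hne12 (hinj hq)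
    have hρ13 : ρ f.1 ≠ ρ β.1 := fun hq => hne13 (hinj hq)
    have hρ14 : ρ f.1 ≠ ρ β.2 := fun hq => hne14 (hinj hq)
    have hρ21 : ρ f.2 ≠ ρ α.1 := fun hq => hne21 (hinj hq)
    have hρ22 : ρ f.2 ≠ ρ α.2 := fun hq => hne22 (hinj hq)
    have hρ23 : ρ f.2 ≠ ρ β.1 := fun hq => hne23 (hinj hq)
    have hρ24 : ρ f.2 ≠ ρ β.2 := fun hq => hne24 (hinj hq)
    have hfneα : f ≠ α := by
      intro hq; rw [hq] at hne11; exact hne11 rfl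
    have hfneβ : f ≠ β := by
      intro hq; rw [hq] at hne13; exact hne13 rfl
    have hXA : Icross ρ α f → False := fun hic => hc1 (hcross f hf hfneα hfneβ (Or.inl hic))
    have hXB : Icross ρ β f → False := fun hic => hc1 (hcross f hf hfneα hfneβ (Or.inr hic))
    apply hc3
    beta_reduce
    have hcat1 : (ρ α.1 < ρ f.1 ∧ ρ f.1 < ρ β.1) ∨ (ρ β.1 < ρ f.1 ∧ ρ f.1 < ρ α.2) ∨
        (ρ α.2 < ρ f.1 ∧ ρ f.1 < ρ β.2) ∨ (ρ f.1 < ρ α.1 ∨ ρ β.2 < ρ f.1) := by omega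
    have hcat2 : (ρ α.1 < ρ f.2 ∧ ρ f.2 < ρ β.1) ∨ (ρ β.1 < ρ f.2 ∧ ρ f.2 < ρ α.2) ∨
        (ρ α.2 < ρ f.2 ∧ ρ f.2 < ρ β.2) ∨ (ρ f.2 < ρ α.1 ∨ ρ β.2 < ρ f.2) := by omega
    rcases hcat1 with h1 | h1 | h1 | h1 <;> rcases hcat2 with h2 | h2 | h2 | h2
    · rw [if_pos h1, if_pos h2]
    · exact absurd (Or.inr ⟨by omega, by omega, by omega⟩ : Icross ρ β f) (fun q => hXB q)
    · exact absurd (Or.inl ⟨by omega, by omega, by omega⟩ : Icross ρ α f) (fun q => hXA q)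
    · rcases h2 with h2 | h2
      · omega
      · exact absurd (Or.inl ⟨by omega, by omega, by omega⟩ : Icross ρ α f) (fun q => hXA q)
    · omega
    · rw [if_neg (by omega), if_pos h1, if_neg (by omega), if_pos h2]
    · exact absurd (Or.inl ⟨by omega, by omega, by omega⟩ : Icross ρ α f) (fun q => hXA q)
    · rcases h2 with h2 | h2
      · omega
      · exact absurd (Or.inl ⟨by omega, by omega, by omega⟩ : Icross ρ β f) (fun q => hXB q)
    · omega
    · omega
    · rw [if_neg (by omega), if_neg (by omega), if_pos h1, if_neg (by omega),
        if_neg (by omega), if_pos h2]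
    · rcases h2 with h2 | h2
      · omega
      · exact absurd (Or.inl ⟨by omega, by omega, by omega⟩ : Icross ρ β f) (fun q => hXB q)
    · rcases h1 with h1 | h1
      · exact absurd (Or.inr ⟨by omega, by omega, by omega⟩ : Icross ρ α f) (fun q => hXA q)
      · omega
    · rcases h1 with h1 | h1
      · exact absurd (Or.inr ⟨by omega, by omega, by omega⟩ : Icross ρ α f) (fun q => hXA q)
      · omega
    · rcases h1 with h1 | h1
      · exact absurd (Or.inr ⟨by omega, by omega, by omega⟩ : Icross ρ β f) (fun q => hXB q)
      · omega
    · rw [if_neg (by omega), if_neg (by omega), if_neg (by omega), if_neg (by omega),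
        if_neg (by omega), if_neg (by omega)]


/-- The combinatorial core: positions on a circle with the wrap-around gap outside `t`,
every edge crossed at most `k` times, yields a balanced separation of order `2k+3`. -/
theorem core (k : ℕ) (t : Finset V) (ρ : V → ℕ) (hinj : Function.Injective ρ)
    (E : Finset (V × V)) (hE1 : ∀ f ∈ E, f.1 ∈ t ∧ f.2 ∈ t ∧ ρ f.1 < ρ f.2)
    (hE2 : ∀ e ∈ E, (E.filter fun f => f ≠ e ∧ Icross ρ e f).card ≤ k) :
    SepGoal k t E := by
  rw [SepGoal]
  by_cases hm3 : t.card ≤ 2*k+3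
  · refine ⟨t, t, Subset.rfl, Subset.rfl, union_self t, ?_, ?_, ?_, ?_⟩
    · intro c hc d hd
      rw [sdiff_self] at hc
      exact absurd hc (notMem_empty c)
    · rw [inter_self]; exact hm3
    · rw [sdiff_self]; simp
    · rw [sdiff_self]; simp
  by_cases hm4 : t.card ≤ 2*k+4
  · have htne : t.Nonempty := by rw [← card_pos]; omega
    obtain ⟨w, hw⟩ := htne
    have herase : t \ t.erase w = {w} := by
      ext w'
      simp only [mem_sdiff, mem_erase, mem_singleton, not_and]
      constructor
      · rintro ⟨hw', hq⟩
        by_contra hne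
        exact (hq hne) hw'
      · rintro rfl
        exact ⟨hw, fun hq _ => hq rfl⟩
    refine ⟨t, t.erase w, Subset.rfl, erase_subset _ _, ?_, ?_, ?_, ?_, ?_⟩
    · rw [union_eq_left]
      exact erase_subset _ _
    · intro c hc d hd
      exfalso
      rw [sdiff_eq_empty_iff_subset.mpr (erase_subset _ _)] at hd
      exact absurd hd (notMem_empty d)
    · rw [inter_eq_right.mpr (erase_subset _ _), card_erase_of_mem hw]
      omega
    · rw [herase, card_singleton]
      omega
    · rw [sdiff_eq_empty_iff_subset.mpr (erase_subset _ _)]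
      simp
  rw [← SepGoal]
  push_neg at hm3 hm4
  by_cases hA : ∃ e ∈ E, 3 * cntc t ρ (ρ e.1) (ρ e.2) ≤ 2 * t.card ∧
      3 * (lowc t ρ (ρ e.1) + hic t ρ (ρ e.2)) ≤ 2 * t.card
  · obtain ⟨e, he, h1, h2⟩ := hA
    exact cutA k t ρ hinj E hE1 hE2 e he h1 h2
  push_neg at hA
  have htne : t.Nonempty := by rw [← card_pos]; omega
  obtain ⟨u, hu, humin⟩ := t.exists_min_image ρ htne
  set T' : Finset V := t.filter (fun w => 2 * t.card ≤ 3 * lowc t ρ (ρ w) + 6) with hT'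
  have hT'ne : T'.Nonempty := by
    obtain ⟨wmax, hwm, hwmax⟩ := t.exists_max_image ρ htne
    refine ⟨wmax, mem_filter.mpr ⟨hwm, ?_⟩⟩
    have h1 := m_split t ρ hinj wmax hwm
    have h2 : hic t ρ (ρ wmax) = 0 := by
      rw [hic, card_eq_zero, filter_eq_empty_iff]
      intro w hw
      have := hwmax w hw
      omega
    omega
  obtain ⟨v, hvT, hvmin⟩ := T'.exists_min_image ρ hT'ne
  have hv : v ∈ t := (mem_filter.mp hvT).1
  have hva : 2 * t.card ≤ 3 * lowc t ρ (ρ v) + 6 := (mem_filter.mp hvT).2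
  have huT : u ∉ T' := by
    intro hq
    have := (mem_filter.mp hq).2
    rw [low_min t ρ u humin] at this
    omega
  have huv_ne : u ≠ v := fun hq => huT (hq ▸ hvT)
  have huv : ρ u < ρ v := by
    rcases lt_or_eq_of_le (humin v hv) with h | h
    · exact h
    · exact absurd (hinj h) huv_ne
  have hw'ne : (t.filter (fun w => ρ w < ρ v)).Nonempty := ⟨u, mem_filter.mpr ⟨hu, huv⟩⟩
  obtain ⟨w', hw'mem, hw'max⟩ := (t.filter (fun w => ρ w < ρ v)).exists_max_image ρ hw'ne
  have hw't : w' ∈ t := (mem_filter.mp hw'mem).1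
  have hw'v : ρ w' < ρ v := (mem_filter.mp hw'mem).2
  have hw'b : 3 * lowc t ρ (ρ w') + 6 < 2 * t.card := by
    by_contra hq
    push_neg at hq
    have hvle := hvmin w' (mem_filter.mpr ⟨hw't, hq⟩)
    omega
  have hlink : lowc t ρ (ρ v) = lowc t ρ (ρ w') + 1 := by
    have h1 := low_split t ρ hinj w' hw't (ρ v) hw'v
    have h2 : cntc t ρ (ρ w') (ρ v) = 0 := by
      rw [cntc, card_eq_zero, filter_eq_empty_iff]
      intro w hw hcon
      have := hw'max w (mem_filter.mpr ⟨hw, hcon.2⟩)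
      omega
    omega
  have hcntuv : cntc t ρ (ρ u) (ρ v) + 1 = lowc t ρ (ρ v) := by
    have h1 := low_split t ρ hinj u hu (ρ v) huv
    have h2 := low_min t ρ u humin
    omega
  have hmv := m_split t ρ hinj v hv
  have hsP : 3 * cntc t ρ (ρ u) (ρ v) ≤ 2 * t.card := by omega
  have hsQ : 3 * hic t ρ (ρ v) ≤ 2 * t.card := by omega
  by_cases hF : (E.filter (fun f => ρ u < ρ f.1 ∧ ρ f.1 < ρ v ∧ ρ v < ρ f.2)).card ≤ 2*k+1
  · exact cut3 k t ρ hinj E hE1 u v hu hv huv humin hsP hsQ hF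
  push_neg at hF
  have hsplitE : ∀ f ∈ E,
      cntc t ρ (ρ f.1) (ρ f.2) + (lowc t ρ (ρ f.1) + hic t ρ (ρ f.2)) + 2 = t.card := by
    intro f hf
    obtain ⟨hf1, hf2, hflt⟩ := hE1 f hf
    have h1 := m_split t ρ hinj f.1 hf1
    have h2 := hi_split t ρ hinj f.2 hf2 (ρ f.1) hflt
    omega
  have hFu_short : ∀ f ∈ E, 2 * t.card < 3 * cntc t ρ (ρ f.1) (ρ f.2) →
      3 * (lowc t ρ (ρ f.1) + hic t ρ (ρ f.2)) + 6 < t.card := by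
    intro f hf hcnt
    have := hsplitE f hf
    omega
  have hFv_short : ∀ f ∈ E, 3 * cntc t ρ (ρ f.1) (ρ f.2) ≤ 2 * t.card →
      3 * cntc t ρ (ρ f.1) (ρ f.2) + 6 < t.card := by
    intro f hf hcnt
    have h2 := hA f hf hcnt
    have := hsplitE f hf
    omega
  set F := E.filter (fun f => ρ u < ρ f.1 ∧ ρ f.1 < ρ v ∧ ρ v < ρ f.2) with hFdef
  set Fu := F.filter (fun f => 2 * t.card < 3 * cntc t ρ (ρ f.1) (ρ f.2)) with hFudef
  set Fv := F.filter (fun f => ¬(2 * t.card < 3 * cntc t ρ (ρ f.1) (ρ f.2))) with hFvdef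
  have hFne : F.Nonempty := by rw [← card_pos]; omega
  by_cases hFvne : Fv.Nonempty
  · obtain ⟨h, hhmem, hhmin⟩ := Fv.exists_min_image (fun f => ρ f.1) hFvne
    have hhF : h ∈ F := (mem_filter.mp hhmem).1
    have hhE : h ∈ E := (mem_filter.mp hhF).1
    have hhP : ρ u < ρ h.1 ∧ ρ h.1 < ρ v ∧ ρ v < ρ h.2 := (mem_filter.mp hhF).2
    have hhcnt : 3 * cntc t ρ (ρ h.1) (ρ h.2) ≤ 2 * t.card := by
      have := (mem_filter.mp hhmem).2
      omega
    have hhFv : ∀ f ∈ E, (ρ u < ρ f.1 ∧ ρ f.1 < ρ v ∧ ρ v < ρ f.2) →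
        3 * cntc t ρ (ρ f.1) (ρ f.2) ≤ 2 * t.card → ρ h.1 ≤ ρ f.1 := by
      intro f hf hstr hcnt
      exact hhmin f (mem_filter.mpr ⟨mem_filter.mpr ⟨hf, hstr⟩, by omega⟩)
    by_cases hFune : Fu.Nonempty
    · obtain ⟨g, hgmem, hgmax⟩ := Fu.exists_max_image (fun f => ρ f.1) hFune
      have hgF : g ∈ F := (mem_filter.mp hgmem).1
      have hgE : g ∈ E := (mem_filter.mp hgF).1
      have hgP : ρ u < ρ g.1 ∧ ρ g.1 < ρ v ∧ ρ v < ρ g.2 := (mem_filter.mp hgF).2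
      have hgcnt : 2 * t.card < 3 * cntc t ρ (ρ g.1) (ρ g.2) := (mem_filter.mp hgmem).2
      have hgout := hFu_short g hgE hgcnt
      have hhinn := hFv_short h hhE hhcnt
      have hgFu : ∀ f ∈ E, (ρ u < ρ f.1 ∧ ρ f.1 < ρ v ∧ ρ v < ρ f.2) →
          2 * t.card < 3 * cntc t ρ (ρ f.1) (ρ f.2) → ρ f.1 ≤ ρ g.1 := by
        intro f hf hstr hcnt
        exact hgmax f (mem_filter.mpr ⟨mem_filter.mpr ⟨hf, hstr⟩, hcnt⟩)
      by_cases hxx : ρ g.1 ≤ ρ h.1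
      · by_cases hyy : ρ h.2 ≤ ρ g.2
        · -- parallel cut
          have h3a := cnt_tri t ρ hinj h.2 (ρ h.1) (ρ g.2)
          have h3b := cnt_le_hi t ρ (ρ h.2) (ρ g.2)
          have h3c : hic t ρ (ρ h.2) ≤ hic t ρ (ρ v) := hi_anti t ρ (le_of_lt hhP.2.2)
          exact cutPar k t ρ hinj E hE1 hE2 u v huv humin g h hgE hhE hgP hhP hgFu hhFv
            hxx hyy hsP (by omega) (by omega)
        · push_neg at hyy
          have hxx' : ρ g.1 < ρ h.1 := by
            rcases lt_or_eq_of_le hxx with hq | hq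
            · exact hq
            · exfalso
              have := cnt_mono t ρ (x := ρ g.1) (y := ρ g.2) (x' := ρ h.1) (y' := ρ h.2)
                (le_of_eq hq.symm) (le_of_lt hyy)
              omega
          have hq1 : cntc t ρ (ρ g.1) (ρ h.1) ≤ cntc t ρ (ρ u) (ρ v) :=
            cnt_mono t ρ (le_of_lt hgP.1) (le_of_lt hhP.2.1)
          have hq2 : cntc t ρ (ρ h.1) (ρ g.2) ≤ cntc t ρ (ρ h.1) (ρ h.2) :=
            cnt_mono t ρ le_rfl (le_of_lt hyy)
          have hq3a := cnt_le_hi t ρ (ρ g.2) (ρ h.2)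
          have hq3b : hic t ρ (ρ g.2) ≤ hic t ρ (ρ v) := hi_anti t ρ (le_of_lt hgP.2.2)
          have hq4 : hic t ρ (ρ h.2) ≤ hic t ρ (ρ g.2) := hi_anti t ρ (le_of_lt hyy)
          exact cutX k t ρ hinj E hE1 hE2 g h hgE hhE hxx' (by omega) hyy
            (by omega) (by omega) (by omega) (by omega)
      · push_neg at hxx
        have hyy : ρ h.2 < ρ g.2 := by
          by_contra hq
          push_neg at hq
          have := cnt_mono t ρ (x := ρ g.1) (y := ρ g.2) (x' := ρ h.1) (y' := ρ h.2)
            (le_of_lt hxx) hq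
          omega
        have hq1 : cntc t ρ (ρ h.1) (ρ g.1) ≤ cntc t ρ (ρ u) (ρ v) :=
          cnt_mono t ρ (le_of_lt hhP.1) (le_of_lt hgP.2.1)
        have hq2 : cntc t ρ (ρ g.1) (ρ h.2) ≤ cntc t ρ (ρ h.1) (ρ h.2) :=
          cnt_mono t ρ (le_of_lt hxx) le_rfl
        have hq3a := cnt_le_hi t ρ (ρ h.2) (ρ g.2)
        have hq3b : hic t ρ (ρ h.2) ≤ hic t ρ (ρ v) := hi_anti t ρ (le_of_lt hhP.2.2)
        have hq4 : lowc t ρ (ρ h.1) ≤ lowc t ρ (ρ g.1) := low_mono t ρ (le_of_lt hxx)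
        exact cutX k t ρ hinj E hE1 hE2 h g hhE hgE hxx (by omega) hyy
          (by omega) (by omega) (by omega) (by omega)
    · -- Fu empty: all crossing edges hug v; use cut5
      have hhminF : ∀ f ∈ E, (ρ u < ρ f.1 ∧ ρ f.1 < ρ v ∧ ρ v < ρ f.2) → ρ h.1 ≤ ρ f.1 := by
        intro f hf hstr
        by_cases hcnt : 2 * t.card < 3 * cntc t ρ (ρ f.1) (ρ f.2)
        · exfalso
          exact hFune ⟨f, mem_filter.mpr ⟨mem_filter.mpr ⟨hf, hstr⟩, hcnt⟩⟩
        · exact hhFv f hf hstr (by omega)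
      exact cut5 k t ρ hinj E hE1 hE2 u v hu huv humin h hhE hhP hhminF hsP hsQ hhcnt
  · -- Fv empty: all crossing edges hug u; use cut4
    obtain ⟨g0, hg0⟩ := hFne
    have hFuF : ∀ f ∈ F, f ∈ Fu := by
      intro f hf
      by_contra hq
      have : f ∈ Fv := by
        rw [hFvdef]
        refine mem_filter.mpr ⟨hf, ?_⟩
        intro hcnt
        exact hq (mem_filter.mpr ⟨hf, hcnt⟩)
      exact hFvne ⟨f, this⟩
    have hFune : Fu.Nonempty := ⟨g0, hFuF g0 hg0⟩
    obtain ⟨g, hgmem, hgmax⟩ := Fu.exists_max_image (fun f => ρ f.1) hFune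
    have hgF : g ∈ F := (mem_filter.mp hgmem).1
    have hgE : g ∈ E := (mem_filter.mp hgF).1
    have hgP : ρ u < ρ g.1 ∧ ρ g.1 < ρ v ∧ ρ v < ρ g.2 := (mem_filter.mp hgF).2
    have hgcnt : 2 * t.card < 3 * cntc t ρ (ρ g.1) (ρ g.2) := (mem_filter.mp hgmem).2
    have hgout := hFu_short g hgE hgcnt
    have hgmaxF : ∀ f ∈ E, (ρ u < ρ f.1 ∧ ρ f.1 < ρ v ∧ ρ v < ρ f.2) → ρ f.1 ≤ ρ g.1 := by
      intro f hf hstr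
      exact hgmax f (hFuF f (mem_filter.mpr ⟨hf, hstr⟩))
    exact cut4 k t ρ hinj E hE1 hE2 u v hv huv humin g hgE hgP hgmaxF hsP hsQ (by omega)


end OkpSep

/-- The separation number of any outer `k`-planar graph is at most `2k + 3`:
every subgraph has a balanced separation of size at most `2k + 3`. -/
theorem stmt9 (k : ℕ) {V : Type*} [Fintype V] [DecidableEq V]
    (G : SimpleGraph V) (h : IsOuterKPlanar k G) :
    SepNumAtMost G (2 * k + 3) := by
  obtain ⟨σ, hσ⟩ := h
  intro t H hHG
  set ρ : V → ℕ := fun w => (σ w).val with hρ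
  have hinj : Function.Injective ρ := by
    intro a b hab
    exact σ.injective (Fin.val_injective hab)
  have hlt_iff : ∀ a b : V, σ a < σ b ↔ ρ a < ρ b := by
    intro a b
    exact Fin.lt_def
  set E : Finset (V × V) := (t ×ˢ t).filter (fun f => H.Adj f.1 f.2 ∧ ρ f.1 < ρ f.2) with hE
  have hEmem : ∀ f, f ∈ E ↔ (f.1 ∈ t ∧ f.2 ∈ t ∧ H.Adj f.1 f.2 ∧ ρ f.1 < ρ f.2) := by
    intro f
    rw [hE]
    simp only [mem_filter, mem_product]
    tauto
  have hE1 : ∀ f ∈ E, f.1 ∈ t ∧ f.2 ∈ t ∧ ρ f.1 < ρ f.2 := by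
    intro f hf
    rw [hEmem] at hf
    exact ⟨hf.1, hf.2.1, hf.2.2.2⟩
  have hE2 : ∀ e ∈ E, (E.filter fun f => f ≠ e ∧ OkpSep.Icross ρ e f).card ≤ k := by
    intro e he
    rw [hEmem] at he
    obtain ⟨he1, he2, heAdj, helt⟩ := he
    have heE : e ∈ E := by rw [hEmem]; exact ⟨he1, he2, heAdj, helt⟩
    have heG : s(e.1, e.2) ∈ G.edgeFinset := by
      rw [SimpleGraph.mem_edgeFinset, SimpleGraph.mem_edgeSet]
      exact hHG heAdj
    refine le_trans ?_ (hσ s(e.1, e.2) heG)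
    apply Finset.card_le_card_of_injOn (fun f => s(f.1, f.2))
    · intro f hf
      simp only [mem_coe, mem_filter] at hf
      obtain ⟨hfE, hfne, hfI⟩ := hf
      rw [hEmem] at hfE
      obtain ⟨hf1, hf2, hfAdj, hflt⟩ := hfE
      simp only [mem_coe, mem_filter]
      refine ⟨?_, ?_, ?_⟩
      · rw [SimpleGraph.mem_edgeFinset, SimpleGraph.mem_edgeSet]
        exact hHG hfAdj
      · intro hq
        rw [Sym2.eq_iff] at hq
        rcases hq with ⟨hq1, hq2⟩ | ⟨hq1, hq2⟩
        · exact hfne (Prod.ext hq1 hq2)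
        · rw [hq1, hq2] at hflt
          omega
      · rw [Sym2.map_pair_eq, Sym2.map_pair_eq]
        refine ⟨σ e.1, σ e.2, σ f.1, σ f.2, rfl, rfl, ?_⟩
        have hee : σ e.1 < σ e.2 := (hlt_iff _ _).mpr helt
        have hff : σ f.1 < σ f.2 := (hlt_iff _ _).mpr hflt
        rw [Interleave, min_eq_left hee.le, max_eq_right hee.le,
          min_eq_left hff.le, max_eq_right hff.le]
        rcases hfI with ⟨i1, i2, i3⟩ | ⟨i1, i2, i3⟩
        · exact Or.inl ⟨(hlt_iff _ _).mpr i1, (hlt_iff _ _).mpr i2, (hlt_iff _ _).mpr i3⟩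
        · exact Or.inr ⟨(hlt_iff _ _).mpr i1, (hlt_iff _ _).mpr i2, (hlt_iff _ _).mpr i3⟩
    · intro f1 hf1 f2 hf2 hq
      simp only [mem_coe, mem_filter] at hf1 hf2
      obtain ⟨hf1E, _, _⟩ := hf1
      obtain ⟨hf2E, _, _⟩ := hf2
      rw [hEmem] at hf1E hf2E
      rw [Sym2.eq_iff] at hq
      rcases hq with ⟨hq1, hq2⟩ | ⟨hq1, hq2⟩
      · exact Prod.ext hq1 hq2
      · exfalso
        have h1 := hf1E.2.2.2
        have h2 := hf2E.2.2.2
        rw [hq1, hq2] at h1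
        omega
  have hcore := OkpSep.core k t ρ hinj E hE1 hE2
  rw [OkpSep.SepGoal] at hcore
  obtain ⟨A, B, h1, h2, h3, h4, h5, h6, h7⟩ := hcore
  refine ⟨A, B, h1, h2, h3, ?_, h5, h6, h7⟩
  intro c hc d hd hAdj
  have hct : c ∈ t := h1 (mem_sdiff.mp hc).1
  have hdt : d ∈ t := h2 (mem_sdiff.mp hd).1
  have hne : c ≠ d := hAdj.ne
  rcases lt_trichotomy (ρ c) (ρ d) with hq | hq | hq
  · exact (h4 c hc d hd).1 ((hEmem (c, d)).mpr ⟨hct, hdt, hAdj, hq⟩)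
  · exact hne (hinj hq)
  · exact (h4 c hc d hd).2 ((hEmem (d, c)).mpr ⟨hdt, hct, hAdj.symm, hq⟩)
end

section
/- In a maximal outer k-quasi-planar drawing on n ≥ 2k−1 vertices labeled v_1,…,v_n in cyclic order, every 'frame' edge is present: for each i and each ℓ with 1 ≤ |ℓ| ≤ k−1 (indices mod n), the edge {v_i, v_{i+ℓ}} belongs to the drawing. -/
open Finset

open scoped Classical

/-- A convex drawing (graph on `Fin n` with vertices in cyclic order `0,…,n-1`)
has no `k` pairwise crossing edges. -/
def NoKPairwiseCross {n : ℕ} (k : ℕ) (G : SimpleGraph (Fin n)) : Prop :=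
  ∀ S : Finset (Sym2 (Fin n)), ↑S ⊆ G.edgeSet →
    (∀ e ∈ S, ∀ f ∈ S, e ≠ f → Sym2Cross e f) → S.card < k

/-- A maximal outer `k`-quasi-planar drawing: no `k` pairwise crossing edges, and
adding any missing chord creates `k` pairwise crossing edges. -/
def MaximalOuterKQP {n : ℕ} (k : ℕ) (G : SimpleGraph (Fin n)) : Prop :=
  NoKPairwiseCross k G ∧
  ∀ a b : Fin n, a ≠ b → ¬ G.Adj a b →
    ¬ NoKPairwiseCross k (G ⊔ SimpleGraph.fromEdgeSet {s(a, b)})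

lemma not_cross_of_mem {n : ℕ} {e f : Sym2 (Fin n)} {x : Fin n} (hc : Sym2Cross e f)
    (hx : x ∈ e) (hy : x ∈ f) : False := by
  obtain ⟨a, b, c, d, rfl, rfl, hint⟩ := hc
  rw [Sym2.mem_iff] at hx hy
  unfold Interleave at hint
  rcases le_total a b with h1 | h1 <;> rcases le_total c d with h2 | h2
  all_goals first
    | rw [min_eq_left h1, max_eq_right h1] at hint
    | rw [min_eq_right h1, max_eq_left h1] at hint
  all_goals first
    | rw [min_eq_left h2, max_eq_right h2] at hint
    | rw [min_eq_right h2, max_eq_left h2] at hint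
  all_goals
    rcases hx with rfl | rfl <;> rcases hy with h | h <;> subst h <;>
      simp only [Fin.lt_iff_val_lt_val] at hint <;> omega

lemma cross_endpoints {n : ℕ} {a b : Fin n} (hab : a < b) {f : Sym2 (Fin n)}
    (hc : Sym2Cross s(a,b) f) :
    ∃ x y, f = s(x,y) ∧ a < x ∧ x < b ∧ (y < a ∨ b < y) := by
  obtain ⟨a', b', c, d, he, rfl, hint⟩ := hc
  have hmm : min a' b' = a ∧ max a' b' = b := by
    rw [Sym2.eq_iff] at he
    rcases he with ⟨rfl, rfl⟩ | ⟨rfl, rfl⟩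
    · exact ⟨min_eq_left hab.le, max_eq_right hab.le⟩
    · exact ⟨min_eq_right hab.le, max_eq_left hab.le⟩
  unfold Interleave at hint
  rw [hmm.1, hmm.2] at hint
  have hcd : s(c, d) = s(min c d, max c d) := by
    rcases le_total c d with h | h
    · rw [min_eq_left h, max_eq_right h]
    · rw [min_eq_right h, max_eq_left h, Sym2.eq_swap]
  rcases hint with ⟨u1, u2, u3⟩ | ⟨u1, u2, u3⟩
  · exact ⟨min c d, max c d, hcd, u1, u2, Or.inr u3⟩
  · exact ⟨max c d, min c d, by rw [hcd, Sym2.eq_swap], u2, u3, Or.inl u1⟩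

lemma card_le_of_endpoints {n : ℕ} [NeZero n] (T : Finset (Fin n)) (S : Finset (Sym2 (Fin n)))
    (hmem : ∀ f ∈ S, ∃ x, x ∈ f ∧ x ∈ T)
    (hcross : ∀ e ∈ S, ∀ f ∈ S, e ≠ f → Sym2Cross e f) :
    S.card ≤ T.card := by
  classical
  set g : Sym2 (Fin n) → Fin n := fun f =>
    if h : ∃ x, x ∈ f ∧ x ∈ T then h.choose else 0 with hg
  have hgmem : ∀ f ∈ S, g f ∈ f ∧ g f ∈ T := by
    intro f hf
    have h := hmem f hf
    simp only [hg, dif_pos h]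
    exact h.choose_spec
  apply Finset.card_le_card_of_injOn g
  · intro f hf
    exact (hgmem f hf).2
  · intro f1 h1 f2 h2 heq
    by_contra hne
    exact not_cross_of_mem (hcross f1 h1 f2 h2 hne) (hgmem f1 h1).1 (heq ▸ (hgmem f2 h2).1)

open Fin.NatCast in
/-- In a maximal outer `k`-quasi-planar drawing on `n ≥ 2k-1` vertices, all
frame edges are present: every chord joining vertices at cyclic distance
`ℓ` with `1 ≤ ℓ ≤ k-1` is an edge. -/
theorem stmt13 (n k : ℕ) [NeZero n] (hn : 2 * k - 1 ≤ n)
    (G : SimpleGraph (Fin n)) (h : MaximalOuterKQP k G)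
    (i : Fin n) (ℓ : ℕ) (h1 : 1 ≤ ℓ) (h2 : ℓ ≤ k - 1) :
    G.Adj i (i + (ℓ : Fin n)) := by
  have hk : 2 ≤ k := by omega
  have hin : i.val < n := i.isLt
  have hln : ℓ < n := by omega
  set j := i + (ℓ : Fin n) with hj
  have hlval : ((ℓ : Fin n)).val = ℓ := by
    simp [Fin.val_natCast, Nat.mod_eq_of_lt hln]
  have hjval : j.val = (i.val + ℓ) % n := by
    rw [hj, Fin.add_def, hlval]
  have hne : i ≠ j := by
    intro hij
    have : (ℓ : Fin n) = 0 := by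
      have := hij.symm
      rwa [hj, add_eq_left] at this
    rw [Fin.ext_iff, hlval] at this
    simp at this
    omega
  by_contra hadj
  have hmax := h.2 i j hne hadj
  unfold NoKPairwiseCross at hmax
  push_neg at hmax
  obtain ⟨S, hSsub, hScross, hScard⟩ := hmax
  have he0 : s(i, j) ∈ S := by
    by_contra h0
    have hsub : ↑S ⊆ G.edgeSet := by
      intro e heS
      have he := hSsub heS
      rw [SimpleGraph.edgeSet_sup, SimpleGraph.edgeSet_fromEdgeSet] at he
      rcases he with he | he
      · exact he
      · exact absurd (he.1 ▸ heS) h0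
    exact absurd hScard (by have := h.1 S hsub hScross; omega)
  set S' := S.erase s(i, j) with hS'
  have hS'card : k - 1 ≤ S'.card := by
    rw [hS', Finset.card_erase_of_mem he0]; omega
  have hS'cross : ∀ f ∈ S', Sym2Cross s(i, j) f := fun f hf =>
    hScross _ he0 f (Finset.mem_of_mem_erase hf) (Finset.ne_of_mem_erase hf).symm
  have hpair : ∀ e ∈ S', ∀ f ∈ S', e ≠ f → Sym2Cross e f := fun e he f hf hef =>
    hScross e (Finset.mem_of_mem_erase he) f (Finset.mem_of_mem_erase hf) hef
  rcases lt_or_ge (i.val + ℓ) n with hcase | hcase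
  · -- no wrap
    have hjv : j.val = i.val + ℓ := by rw [hjval, Nat.mod_eq_of_lt hcase]
    have hij : i < j := by rw [Fin.lt_iff_val_lt_val, hjv]; omega
    have hend : ∀ f ∈ S', ∃ x, x ∈ f ∧ x ∈ Finset.Ioo i j := by
      intro f hf
      obtain ⟨x, y, rfl, hx1, hx2, _⟩ := cross_endpoints hij (hS'cross f hf)
      exact ⟨x, Sym2.mem_mk_left x y, Finset.mem_Ioo.mpr ⟨hx1, hx2⟩⟩
    have hle := card_le_of_endpoints _ S' hend hpair
    rw [Fin.card_Ioo, hjv] at hle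
    omega
  · -- wrap
    have hjv : j.val = i.val + ℓ - n := by
      rw [hjval, Nat.mod_eq_sub_mod hcase, Nat.mod_eq_of_lt (by omega)]
    have hji : j < i := by rw [Fin.lt_iff_val_lt_val, hjv]; omega
    have hend : ∀ f ∈ S', ∃ x, x ∈ f ∧ x ∈ (Finset.Icc j i)ᶜ := by
      intro f hf
      have hc : Sym2Cross s(j, i) f := by rw [Sym2.eq_swap]; exact hS'cross f hf
      obtain ⟨x, y, rfl, _, _, hy⟩ := cross_endpoints hji hc
      refine ⟨y, Sym2.mem_mk_right x y, ?_⟩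
      rw [Finset.mem_compl, Finset.mem_Icc]
      rintro ⟨hy1, hy2⟩
      rcases hy with hy | hy
      · exact absurd hy1 (not_le.mpr hy)
      · exact absurd hy2 (not_le.mpr hy)
    have hle := card_le_of_endpoints _ S' hend hpair
    rw [Finset.card_compl, Fin.card_Icc, Fintype.card_fin, hjv] at hle
    omega
end

section
/- The complete bipartite graph K_{p,q} with p ≥ 3 and q ≥ 5 is not outer 3-quasi-planar: in every cyclic placement of its vertices, some three edges pairwise cross. -/
open Finset

open scoped Classical

/- ### Auxiliary material -/

instance instDecInterleave {n : ℕ} (a b c d : Fin n) : Decidable (Interleave a b c d) := by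
  unfold Interleave; infer_instance

lemma interleave_symm {n : ℕ} {a b c d : Fin n} (h : Interleave a b c d) :
    Interleave c d a b := Or.symm h

lemma interleave_map {m n : ℕ} {g : Fin m → Fin n} (hg : StrictMono g)
    {a b c d : Fin m} (h : Interleave a b c d) : Interleave (g a) (g b) (g c) (g d) := by
  have hmin : ∀ x y : Fin m, g (min x y) = min (g x) (g y) := fun x y => hg.monotone.map_min
  have hmax : ∀ x y : Fin m, g (max x y) = max (g x) (g y) := fun x y => hg.monotone.map_max
  unfold Interleave at h ⊢
  rcases h with ⟨h1, h2, h3⟩ | ⟨h1, h2, h3⟩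
  · exact Or.inl ⟨by rw [← hmin, ← hmin]; exact hg h1,
      by rw [← hmin, ← hmax]; exact hg h2, by rw [← hmax, ← hmax]; exact hg h3⟩
  · exact Or.inr ⟨by rw [← hmin, ← hmin]; exact hg h1,
      by rw [← hmin, ← hmax]; exact hg h2, by rw [← hmax, ← hmax]; exact hg h3⟩

lemma interleave_ne {n : ℕ} {a b c d : Fin n} (h : Interleave a b c d) :
    s(a, b) ≠ s(c, d) := by
  intro he
  have h1 : min a b = min c d := by
    rcases Sym2.eq_iff.mp he with ⟨rfl, rfl⟩ | ⟨rfl, rfl⟩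
    · rfl
    · exact min_comm _ _
  rcases h with ⟨h, -⟩ | ⟨h, -⟩ <;> rw [h1] at h <;> exact lt_irrefl _ h

/-- The finite core: among 8 points on a circle, 3 of one color and 5 of the other,
there are three pairwise crossing bichromatic chords. -/
lemma key : ∀ f : Fin 8 → Bool, (Finset.univ.filter (fun i => f i = true)).card = 3 →
    ∃ a1, f a1 = true ∧ ∃ b1, f b1 = false ∧ ∃ a2, f a2 = true ∧ ∃ b2, f b2 = false ∧
      Interleave a1 b1 a2 b2 ∧ ∃ a3, f a3 = true ∧ ∃ b3, f b3 = false ∧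
      Interleave a1 b1 a3 b3 ∧ Interleave a2 b2 a3 b3 := by
  set_option maxRecDepth 10000 in decide

/-- The embedding of the 8 selected vertices of `K_{p,q}`. -/
def W (p q : ℕ) (hp : 3 ≤ p) (hq : 5 ≤ q) (i : Fin 8) : Fin p ⊕ Fin q :=
  if h : (i : ℕ) < 3 then Sum.inl ⟨i, by omega⟩
  else Sum.inr ⟨(i : ℕ) - 3, by have := i.isLt; omega⟩

lemma W_inj (p q : ℕ) (hp : 3 ≤ p) (hq : 5 ≤ q) : Function.Injective (W p q hp hq) := by
  intro i j hij
  unfold W at hij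
  split_ifs at hij with h1 h2 h2 <;>
    simp only [Sum.inl.injEq, Sum.inr.injEq, Fin.mk.injEq] at hij <;>
    · have := i.isLt; have := j.isLt
      exact Fin.ext (by omega)

lemma W_adj (p q : ℕ) (hp : 3 ≤ p) (hq : 5 ≤ q) (i j : Fin 8)
    (hi : (i : ℕ) < 3) (hj : ¬ (j : ℕ) < 3) :
    (completeBipartiteGraph (Fin p) (Fin q)).Adj (W p q hp hq i) (W p q hp hq j) := by
  unfold W
  rw [dif_pos hi, dif_neg hj]
  simp

/-- `K_{p,q}` with `p ≥ 3` and `q ≥ 5` is not outer 3-quasi-planar. -/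
theorem stmt15 (p q : ℕ) (hp : 3 ≤ p) (hq : 5 ≤ q) :
    ¬ IsOuterKQuasiPlanar 3 (completeBipartiteGraph (Fin p) (Fin q)) := by
  rintro ⟨σ, hσ⟩
  -- the 8 selected points on the circle
  set x : Fin 8 → Fin (Fintype.card (Fin p ⊕ Fin q)) := fun i => σ (W p q hp hq i) with hx
  have hx_inj : Function.Injective x := fun i j h => W_inj p q hp hq (σ.injective h)
  set T : Finset (Fin (Fintype.card (Fin p ⊕ Fin q))) := Finset.image x Finset.univ with hT
  have hTcard : T.card = 8 := by
    rw [hT, Finset.card_image_of_injective _ hx_inj, Finset.card_univ, Fintype.card_fin]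
  -- the increasing enumeration of the 8 points
  set g : Fin 8 → Fin (Fintype.card (Fin p ⊕ Fin q)) := fun i => T.orderEmbOfFin hTcard i with hg
  have hg_mono : StrictMono g := (T.orderEmbOfFin hTcard).strictMono
  have hgmem : ∀ i, ∃ j, x j = g i := by
    intro i
    have hmem : g i ∈ T := T.orderEmbOfFin_mem hTcard i
    rcases Finset.mem_image.mp hmem with ⟨j, -, hj⟩
    exact ⟨j, hj⟩
  choose π hπ using hgmem
  have hπ_inj : Function.Injective π := by
    intro i j h
    apply hg_mono.injective
    rw [← hπ i, ← hπ j, h]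
  have hπ_surj : Function.Surjective π := Finite.injective_iff_surjective.mp hπ_inj
  -- the coloring of the sorted positions
  set f : Fin 8 → Bool := fun i => decide ((π i : ℕ) < 3) with hf
  have hcond : ∀ i, f i = true → (π i : ℕ) < 3 := fun i hi => of_decide_eq_true hi
  have hcond' : ∀ i, f i = false → ¬ (π i : ℕ) < 3 := fun i hi => of_decide_eq_false hi
  have hfcard : (Finset.univ.filter (fun i => f i = true)).card = 3 := by
    have h3 : (Finset.univ.filter (fun j : Fin 8 => decide ((j : ℕ) < 3) = true)).card = 3 := by
      decide
    rw [← h3]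
    apply Finset.card_bij (fun i _ => π i)
    · intro a ha
      simp only [Finset.mem_filter, Finset.mem_univ, true_and] at ha ⊢
      exact ha
    · intro a _ b _ h
      exact hπ_inj h
    · intro b hb
      obtain ⟨a, rfl⟩ := hπ_surj b
      simp only [Finset.mem_filter, Finset.mem_univ, true_and] at hb ⊢
      exact ⟨a, hb, rfl⟩
  obtain ⟨a1, ha1, b1, hb1, a2, ha2, b2, hb2, h12, a3, ha3, b3, hb3, h13, h23⟩ := key f hfcard
  -- the corresponding vertices
  set v : Fin 8 → Fin p ⊕ Fin q := fun i => W p q hp hq (π i) with hv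
  have hσv : ∀ i, σ (v i) = g i := fun i => hπ i
  have hadj : ∀ i j, f i = true → f j = false →
      (completeBipartiteGraph (Fin p) (Fin q)).Adj (v i) (v j) := fun i j hi hj =>
    W_adj p q hp hq (π i) (π j) (hcond i hi) (hcond' j hj)
  -- the three pairwise crossing edges
  set e1 : Sym2 (Fin p ⊕ Fin q) := s(v a1, v b1) with he1
  set e2 : Sym2 (Fin p ⊕ Fin q) := s(v a2, v b2) with he2
  set e3 : Sym2 (Fin p ⊕ Fin q) := s(v a3, v b3) with he3
  have hm1 : e1.map σ = s(g a1, g b1) := by rw [he1, Sym2.map_pair_eq, hσv, hσv]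
  have hm2 : e2.map σ = s(g a2, g b2) := by rw [he2, Sym2.map_pair_eq, hσv, hσv]
  have hm3 : e3.map σ = s(g a3, g b3) := by rw [he3, Sym2.map_pair_eq, hσv, hσv]
  have I12 : Interleave (g a1) (g b1) (g a2) (g b2) := interleave_map hg_mono h12
  have I13 : Interleave (g a1) (g b1) (g a3) (g b3) := interleave_map hg_mono h13
  have I23 : Interleave (g a2) (g b2) (g a3) (g b3) := interleave_map hg_mono h23
  have d12 : e1 ≠ e2 := fun h => interleave_ne I12 (by rw [← hm1, ← hm2, h])
  have d13 : e1 ≠ e3 := fun h => interleave_ne I13 (by rw [← hm1, ← hm3, h])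
  have d23 : e2 ≠ e3 := fun h => interleave_ne I23 (by rw [← hm2, ← hm3, h])
  set S : Finset (Sym2 (Fin p ⊕ Fin q)) := {e1, e2, e3} with hS
  have hmemS : ∀ e ∈ S, e = e1 ∨ e = e2 ∨ e = e3 := by
    intro e he
    simpa [hS, Finset.mem_insert, Finset.mem_singleton] using he
  have hsub : ↑S ⊆ (completeBipartiteGraph (Fin p) (Fin q)).edgeSet := by
    intro e he
    rcases hmemS e (Finset.mem_coe.mp he) with rfl | rfl | rfl
    · exact ((completeBipartiteGraph (Fin p) (Fin q)).mem_edgeSet).mpr (hadj a1 b1 ha1 hb1)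
    · exact ((completeBipartiteGraph (Fin p) (Fin q)).mem_edgeSet).mpr (hadj a2 b2 ha2 hb2)
    · exact ((completeBipartiteGraph (Fin p) (Fin q)).mem_edgeSet).mpr (hadj a3 b3 ha3 hb3)
  have hpair : ∀ e ∈ S, ∀ f' ∈ S, e ≠ f' → Sym2Cross (e.map σ) (f'.map σ) := by
    intro e he f' hf' hne
    rcases hmemS e he with rfl | rfl | rfl <;> rcases hmemS f' hf' with rfl | rfl | rfl
    · exact absurd rfl hne
    · exact ⟨g a1, g b1, g a2, g b2, hm1, hm2, I12⟩
    · exact ⟨g a1, g b1, g a3, g b3, hm1, hm3, I13⟩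
    · exact ⟨g a2, g b2, g a1, g b1, hm2, hm1, interleave_symm I12⟩
    · exact absurd rfl hne
    · exact ⟨g a2, g b2, g a3, g b3, hm2, hm3, I23⟩
    · exact ⟨g a3, g b3, g a1, g b1, hm3, hm1, interleave_symm I13⟩
    · exact ⟨g a3, g b3, g a2, g b2, hm3, hm2, interleave_symm I23⟩
    · exact absurd rfl hne
  have hcard : S.card = 3 := by
    rw [hS]
    rw [Finset.card_insert_of_notMem (by simp [d12, d13]),
      Finset.card_insert_of_notMem (by simp [d23]), Finset.card_singleton]
  have := hσ S hsub hpair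
  omega
end

section
/- The complete bipartite graph K_{4,4} is outer 3-quasi-planar: there exists a cyclic ordering of its 8 vertices in which no three edges of K_{4,4} mutually cross. -/
open Finset

open scoped Classical

instance {n : ℕ} (a b c d : Fin n) : Decidable (Interleave a b c d) := by
  unfold Interleave; infer_instance

def kToPos : Fin 4 ⊕ Fin 4 → Fin 8
  | .inl x => ![0, 1, 4, 5] x
  | .inr y => ![2, 3, 6, 7] y

def kOfPos : Fin 8 → Fin 4 ⊕ Fin 4 :=
  ![.inl 0, .inl 1, .inr 0, .inr 1, .inl 2, .inl 3, .inr 2, .inr 3]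

def kEquiv0 : (Fin 4 ⊕ Fin 4) ≃ Fin 8 where
  toFun := kToPos
  invFun := kOfPos
  left_inv := by decide
  right_inv := by decide

def kEquiv : (Fin 4 ⊕ Fin 4) ≃ Fin (Fintype.card (Fin 4 ⊕ Fin 4)) :=
  kEquiv0.trans (finCongr (by simp))

lemma interleave_of_sym2cross {n : ℕ} {a b c d : Fin n}
    (h : Sym2Cross s(a, b) s(c, d)) : Interleave a b c d := by
  obtain ⟨a', b', c', d', h1, h2, h3⟩ := h
  rw [Sym2.eq_iff] at h1 h2
  rcases h1 with ⟨rfl, rfl⟩ | ⟨rfl, rfl⟩ <;> rcases h2 with ⟨rfl, rfl⟩ | ⟨rfl, rfl⟩ <;>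
    simp_all [Interleave, min_comm, max_comm]

lemma edge_form (e : Sym2 (Fin 4 ⊕ Fin 4))
    (he : e ∈ (completeBipartiteGraph (Fin 4) (Fin 4)).edgeSet) :
    ∃ x y : Fin 4, e = s(Sum.inl x, Sum.inr y) := by
  induction e using Sym2.ind with
  | _ u v =>
    rw [SimpleGraph.mem_edgeSet] at he
    cases u with
    | inl x =>
      cases v with
      | inl x' => simp [completeBipartiteGraph] at he
      | inr y => exact ⟨x, y, rfl⟩
    | inr y =>
      cases v with
      | inl x => exact ⟨x, y, Sym2.eq_swap⟩
      | inr y' => simp [completeBipartiteGraph] at he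

lemma kMain : ∀ x1 y1 x2 y2 x3 y3 : Fin 4,
    ¬(Interleave (kEquiv (.inl x1)) (kEquiv (.inr y1)) (kEquiv (.inl x2)) (kEquiv (.inr y2)) ∧
      Interleave (kEquiv (.inl x1)) (kEquiv (.inr y1)) (kEquiv (.inl x3)) (kEquiv (.inr y3)) ∧
      Interleave (kEquiv (.inl x2)) (kEquiv (.inr y2)) (kEquiv (.inl x3)) (kEquiv (.inr y3))) := by
  decide

/-- `K_{4,4}` is outer 3-quasi-planar. -/
theorem stmt18 : IsOuterKQuasiPlanar 3 (completeBipartiteGraph (Fin 4) (Fin 4)) := by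
  refine ⟨kEquiv, ?_⟩
  intro S hS hcross
  by_contra hcard
  push_neg at hcard
  obtain ⟨e, f, g, he, hf, hg, hef, heg, hfg⟩ :=
    Finset.two_lt_card_iff.mp (show 2 < S.card by omega)
  obtain ⟨x1, y1, rfl⟩ := edge_form e (hS he)
  obtain ⟨x2, y2, rfl⟩ := edge_form f (hS hf)
  obtain ⟨x3, y3, rfl⟩ := edge_form g (hS hg)
  have h12 := hcross _ he _ hf hef
  have h13 := hcross _ he _ hg heg
  have h23 := hcross _ hf _ hg hfg
  rw [Sym2.map_pair_eq, Sym2.map_pair_eq] at h12 h13 h23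
  exact kMain x1 y1 x2 y2 x3 y3
    ⟨interleave_of_sym2cross h12, interleave_of_sym2cross h13, interleave_of_sym2cross h23⟩
end
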